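/- arXiv:2304.03455 — 5 statements merged into one kernel-verified Lean document; each statement's English description precedes it below -/
import Mathlib

section
/- For a Hausdorff space X, the hyperspace CL(X) with the locally finite topology is metrizable if and only if X is metrizable and the set of non-isolated points of X is compact. -/
open Set TopologicalSpace

/-- The hyperspace of nonempty closed subsets of `X`. -/
structure CL (X : Type*) [TopologicalSpace X] where
  carrier : Set X
  nonempty' : carrier.Nonempty
  isClosed' : IsClosed carrier

/-- A quasi-metric: like a metric but without symmetry. -/
def IsQuasiMetric {X : Type*} (d : X → X → ℝ) : Prop :=
  (∀ x y, 0 ≤ d x y) ∧ (∀ x y, d x y = 0 ↔ x = y) ∧ (∀ x y z, d x z ≤ d x y + d y z)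

/-- A space is quasi-metrizable if the balls of some quasi-metric generate its topology. -/
def QuasiMetrizable (X : Type*) [TopologicalSpace X] : Prop :=
  ∃ d : X → X → ℝ, IsQuasiMetric d ∧
    ∀ s : Set X, IsOpen s ↔ ∀ x ∈ s, ∃ ε > 0, {y | d x y < ε} ⊆ s

/-- The set of non-isolated points of `X`. -/
def NI (X : Type*) [TopologicalSpace X] : Set X := {x | ¬ IsOpen ({x} : Set X)}

/-- A subset is countably compact if every countable open cover has a finite subcover. -/
def CountablyCompactSet {Y : Type*} [TopologicalSpace Y] (s : Set Y) : Prop :=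
  ∀ f : ℕ → Set Y, (∀ n, IsOpen (f n)) → s ⊆ ⋃ n, f n → ∃ t : Finset ℕ, s ⊆ ⋃ n ∈ t, f n

/-- A space is hemicompact if some sequence of compact sets is cofinal in the compact sets. -/
def Hemicompact (X : Type*) [TopologicalSpace X] : Prop :=
  ∃ K : ℕ → Set X, (∀ n, IsCompact (K n)) ∧ ∀ L : Set X, IsCompact L → ∃ n, L ⊆ K n

/-- The locally finite topology on `CL X`: subbase `V⁺` for `V` open and `𝒰⁻` for `𝒰` a
locally finite family of open sets. -/
def locFinTop (X : Type*) [TopologicalSpace X] : TopologicalSpace (CL X) :=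
  generateFrom
    ({S | ∃ U : Set X, IsOpen U ∧ S = {A : CL X | A.carrier ⊆ U}} ∪
     {S | ∃ 𝒰 : Set (Set X), (∀ U ∈ 𝒰, IsOpen U) ∧
        LocallyFinite (fun U : 𝒰 => (U : Set X)) ∧
        S = {A : CL X | ∀ U ∈ 𝒰, (A.carrier ∩ U).Nonempty}})

noncomputable instance (X : Type*) [TopologicalSpace X] : TopologicalSpace (CL X) :=
  locFinTop X


open Set TopologicalSpace Filter Metric Topology

namespace CLaux

variable {X : Type*} [TopologicalSpace X]

theorem CL.ext' {A B : CL X} (h : A.carrier = B.carrier) : A = B := by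
  cases A; cases B; simpa using h

theorem isOpen_plus {V : Set X} (hV : IsOpen V) : IsOpen {A : CL X | A.carrier ⊆ V} :=
  TopologicalSpace.GenerateOpen.basic _ (Or.inl ⟨V, hV, rfl⟩)

theorem isOpen_minus {𝒰 : Set (Set X)} (h1 : ∀ U ∈ 𝒰, IsOpen U)
    (h2 : LocallyFinite (fun U : 𝒰 => (U : Set X))) :
    IsOpen {A : CL X | ∀ U ∈ 𝒰, (A.carrier ∩ U).Nonempty} :=
  TopologicalSpace.GenerateOpen.basic _ (Or.inr ⟨𝒰, h1, h2, rfl⟩)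

theorem isClosed_NI : IsClosed (NI X) := by
  rw [← isOpen_compl_iff]
  rw [isOpen_iff_forall_mem_open]
  intro x hx
  simp only [NI, mem_compl_iff, mem_setOf_eq, not_not] at hx
  refine ⟨{x}, ?_, hx, rfl⟩
  intro y hy
  simp only [mem_singleton_iff] at hy
  subst hy
  simpa [NI, mem_compl_iff] using hx

/-- The singleton embedding. -/
noncomputable def sing [T1Space X] (x : X) : CL X :=
  ⟨{x}, ⟨x, rfl⟩, isClosed_singleton⟩

theorem inter_of_locallyFinite {𝒰 : Set (Set X)}
    (h2 : LocallyFinite (fun U : 𝒰 => (U : Set X))) {x : X} :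
    {U ∈ 𝒰 | x ∈ U}.Finite := by
  obtain ⟨N, hN, hfin⟩ := h2 x
  have : {U ∈ 𝒰 | x ∈ U} ⊆ (fun U : 𝒰 => (U : Set X)) '' {i : 𝒰 | ((i : Set X) ∩ N).Nonempty} := by
    rintro U ⟨hU, hxU⟩
    exact ⟨⟨U, hU⟩, ⟨x, hxU, mem_of_mem_nhds hN⟩, rfl⟩
  exact (hfin.image _).subset this

theorem isOpen_sInter_of_locallyFinite {𝒰 : Set (Set X)} (h1 : ∀ U ∈ 𝒰, IsOpen U)
    (h2 : LocallyFinite (fun U : 𝒰 => (U : Set X))) :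
    IsOpen (⋂ U ∈ 𝒰, U) := by
  rw [isOpen_iff_forall_mem_open]
  intro x hx
  simp only [mem_iInter] at hx
  have hfin : {U ∈ 𝒰 | x ∈ U}.Finite := inter_of_locallyFinite h2
  have heq : 𝒰 = {U ∈ 𝒰 | x ∈ U} := by
    ext U; exact ⟨fun h => ⟨h, hx U h⟩, fun h => h.1⟩
  refine ⟨⋂ U ∈ 𝒰, U, le_refl _, ?_, by simp only [mem_iInter]; exact hx⟩
  rw [heq]
  exact hfin.isOpen_biInter (fun U hU => h1 U hU.1)

theorem continuous_sing [T1Space X] : Continuous (sing (X := X)) := by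
  rw [continuous_def]
  intro s hs
  change TopologicalSpace.GenerateOpen _ s at hs
  induction hs with
  | basic t ht =>
    rcases ht with ⟨V, hV, rfl⟩ | ⟨𝒰, h1, h2, rfl⟩
    · convert hV using 1
      ext x; simp [sing, singleton_subset_iff]
    · have : sing ⁻¹' {A : CL X | ∀ U ∈ 𝒰, (A.carrier ∩ U).Nonempty} = ⋂ U ∈ 𝒰, U := by
        ext x
        simp [sing, singleton_inter_nonempty]
      rw [this]
      exact isOpen_sInter_of_locallyFinite h1 h2
  | univ => exact isOpen_univ
  | inter s t _ _ hs ht => exact hs.inter ht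
  | sUnion S _ hS =>
    rw [preimage_sUnion]
    exact isOpen_biUnion hS

theorem isInducing_sing [T1Space X] : Topology.IsInducing (sing (X := X)) := by
  refine ⟨le_antisymm (continuous_iff_le_induced.mp continuous_sing) ?_⟩
  intro V hV
  refine isOpen_induced_iff.mpr ⟨{A : CL X | A.carrier ⊆ V}, isOpen_plus hV, ?_⟩
  ext x; simp [sing, singleton_subset_iff]

theorem isEmbedding_sing [T1Space X] : Topology.IsEmbedding (sing (X := X)) :=
  ⟨isInducing_sing, fun x y h => by
    simpa [sing, singleton_eq_singleton_iff] using congrArg CL.carrier h⟩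

theorem metrizable_X_of_CL [T1Space X] [MetrizableSpace (CL X)] : MetrizableSpace X :=
  isEmbedding_sing.metrizableSpace

end CLaux

-- chunk 2 : forward compactness
namespace CLaux

variable {X : Type*} [TopologicalSpace X]

theorem locFinTop_eq :
    (instTopologicalSpaceCL X : TopologicalSpace (CL X)) = generateFrom
    ({S | ∃ U : Set X, IsOpen U ∧ S = {A : CL X | A.carrier ⊆ U}} ∪
     {S | ∃ 𝒰 : Set (Set X), (∀ U ∈ 𝒰, IsOpen U) ∧
        LocallyFinite (fun U : 𝒰 => (U : Set X)) ∧
        S = {A : CL X | ∀ U ∈ 𝒰, (A.carrier ∩ U).Nonempty}}) := rfl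

theorem compact_NI_of_CL [MetrizableSpace X] [MetrizableSpace (CL X)] :
    IsCompact (NI X) := by
  letI : MetricSpace X := metrizableSpaceMetric X
  rw [isCompact_iff_isSeqCompact]
  by_contra hseq
  rw [IsSeqCompact] at hseq
  push_neg at hseq
  obtain ⟨x, hxNI, hno⟩ := hseq
  -- no cluster points
  have hclp : ∀ p : X, ∃ N ∈ 𝓝 p, {n | x n ∈ N}.Finite := by
    intro p
    by_contra hcl
    push_neg at hcl
    have hmcp : MapClusterPt p atTop x := by
      rw [mapClusterPt_iff_frequently]
      intro s hs
      rw [Nat.frequently_atTop_iff_infinite]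
      exact hcl s hs
    obtain ⟨ψ, hψ, hψt⟩ := TopologicalSpace.FirstCountableTopology.tendsto_subseq hmcp
    have hpNI : p ∈ NI X :=
      isClosed_NI.mem_of_tendsto hψt (Filter.Eventually.of_forall fun n => hxNI _)
    exact hno p hpNI ψ hψ hψt
  -- isolation of the range
  have acc : ∀ p : X, ∃ N, IsOpen N ∧ p ∈ N ∧ ∀ q ∈ N, q ∈ range x → q = p := by
    intro p
    obtain ⟨N₀, hN₀, hF⟩ := hclp p
    have hK : IsClosed ((x '' {n | x n ∈ N₀}) \ {p}) :=
      ((hF.image x).subset diff_subset).isClosed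
    refine ⟨interior N₀ \ (x '' {n | x n ∈ N₀} \ {p}), isOpen_interior.sdiff hK, ?_, ?_⟩
    · exact ⟨mem_interior_iff_mem_nhds.mpr hN₀, fun h => h.2 rfl⟩
    · rintro q ⟨hq1, hq2⟩ ⟨n, rfl⟩
      by_contra hne
      exact hq2 ⟨⟨n, show x n ∈ N₀ from interior_subset hq1, rfl⟩, hne⟩
  -- subsets of the range are closed
  have closedSub : ∀ s ⊆ range x, IsClosed s := by
    intro s hs
    rw [← closure_subset_iff_isClosed]
    intro p hp
    obtain ⟨N, hNo, hpN, hN⟩ := acc p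
    obtain ⟨q, hqN, hqs⟩ := mem_closure_iff.mp hp N hNo hpN
    rwa [← hN q hqN (hs hqs)]
  -- range is infinite
  have hinf : (range x).Infinite := by
    by_contra hfin
    rw [Set.not_infinite] at hfin
    haveI := hfin.to_subtype
    obtain ⟨v, hv⟩ := Finite.exists_infinite_fiber
      (fun n => (⟨x n, mem_range_self n⟩ : range x))
    obtain ⟨N, hN, hNf⟩ := hclp v
    have hsub : (fun n => (⟨x n, mem_range_self n⟩ : range x)) ⁻¹' {v} ⊆ {n | x n ∈ N} := by
      intro n hn
      simp only [mem_preimage, mem_singleton_iff] at hn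
      have : x n = (v : X) := congrArg Subtype.val hn
      rw [mem_setOf_eq, this]
      exact mem_of_mem_nhds hN
    exact ((Set.infinite_coe_iff.mp hv).mono hsub) hNf
  -- injective sequence
  set e := hinf.natEmbedding (range x) with he
  set y : ℕ → X := fun n => (e n : X) with hy
  have hyinj : Function.Injective y := fun a b h => e.injective (Subtype.ext h)
  have hyr : ∀ n, y n ∈ range x := fun n => (e n).2
  have hyNI : ∀ n, y n ∈ NI X := by
    rintro n
    obtain ⟨m, hm⟩ := hyr n
    rw [← hm]; exact hxNI m
  set D : Set X := range y with hD
  have hDr : D ⊆ range x := range_subset_iff.mpr hyr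
  have hDclosed : IsClosed D := closedSub D hDr
  have hDnclosed : ∀ n, IsClosed (D \ {y n}) :=
    fun n => closedSub _ (diff_subset.trans hDr)
  have hDn_ne : ∀ n, (D \ {y n}).Nonempty := by
    intro n
    exact ⟨y (n + 1), mem_range_self _, fun h => by
      exact (Nat.succ_ne_self n) (hyinj (mem_singleton_iff.mp h))⟩
  have hρpos : ∀ n, 0 < infDist (y n) (D \ {y n}) := by
    intro n
    obtain ⟨N, hNo, hpN, hN⟩ := acc (y n)
    obtain ⟨ε, hε, hball⟩ := Metric.isOpen_iff.mp hNo _ hpN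
    refine lt_of_lt_of_le hε (le_of_not_gt fun hlt => ?_)
    obtain ⟨z, hz, hzd⟩ := (infDist_lt_iff (hDn_ne n)).mp hlt
    rw [dist_comm] at hzd
    exact hz.2 (hN z (hball hzd) (hDr hz.1))
  -- the separating open sets
  set W : ℕ → Set X := fun n => {z | dist z (y n) < infDist z (D \ {y n}) / 2} with hW
  have hWopen : ∀ n, IsOpen (W n) := by
    intro n
    exact isOpen_lt (continuous_id.dist continuous_const)
      ((continuous_infDist_pt _).div_const 2)
  have hyW : ∀ n, y n ∈ W n := by
    intro n
    simp only [W, mem_setOf_eq, dist_self]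
    exact half_pos (hρpos n)
  have hWD : ∀ m n, y m ∈ W n → m = n := by
    intro m n h
    by_contra hne
    have hmem : y m ∈ D \ {y n} := ⟨mem_range_self _, fun hc => hne (hyinj hc)⟩
    have : infDist (y m) (D \ {y n}) = 0 := infDist_zero_of_mem hmem
    simp only [W, mem_setOf_eq, this] at h
    have := dist_nonneg (x := y m) (y := y n)
    linarith
  have hWdisc : ∀ z : X, ∃ N ∈ 𝓝 z, ∃ m, ∀ n, (W n ∩ N).Nonempty → n = m := by
    intro z
    by_cases hzD : z ∈ D
    · obtain ⟨m, rfl⟩ := hzD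
      refine ⟨Metric.ball (y m) (infDist (y m) (D \ {y m}) / 6),
        Metric.ball_mem_nhds _ (by have := hρpos m; linarith), m, ?_⟩
      rintro n ⟨w, hwW, hwN⟩
      by_contra hne
      have hym : y m ∈ D \ {y n} := ⟨mem_range_self _, fun hc => hne (hyinj hc).symm⟩
      have h1 : infDist w (D \ {y n}) ≤ dist w (y m) := infDist_le_dist_of_mem hym
      simp only [W, mem_setOf_eq] at hwW
      rw [Metric.mem_ball] at hwN
      have h2 : infDist (y m) (D \ {y m}) ≤ dist (y m) (y n) :=
        infDist_le_dist_of_mem ⟨mem_range_self _, fun hc => hne (hyinj hc)⟩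
      have h3 : dist (y m) (y n) ≤ dist (y m) w + dist w (y n) := dist_triangle _ _ _
      rw [dist_comm (y m) w] at h3
      have := hρpos m
      linarith
    · have htpos : 0 < infDist z D :=
        (hDclosed.notMem_iff_infDist_pos ⟨y 0, mem_range_self _⟩).mp hzD
      set t := infDist z D with ht
      obtain ⟨w', hw'D, hw'⟩ := (infDist_lt_iff ⟨y 0, mem_range_self _⟩).mp
        (show infDist z D < t * (5 / 4) by nlinarith)
      obtain ⟨m, rfl⟩ := hw'D
      refine ⟨Metric.ball z (t / 4), Metric.ball_mem_nhds _ (by positivity), m, ?_⟩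
      rintro n ⟨w, hwW, hwN⟩
      by_contra hne
      have hym : y m ∈ D \ {y n} := ⟨mem_range_self _, fun hc => hne (hyinj hc).symm⟩
      have h1 : infDist w (D \ {y n}) ≤ dist w (y m) := infDist_le_dist_of_mem hym
      simp only [W, mem_setOf_eq] at hwW
      rw [Metric.mem_ball] at hwN
      have h2 : dist w (y m) ≤ dist w z + dist z (y m) := dist_triangle _ _ _
      have h3 : dist z (y n) ≤ dist w z + dist w (y n) := by
        have := dist_triangle z w (y n)
        rw [dist_comm z w] at this
        linarith
      have h4 : t ≤ dist z (y n) := infDist_le_dist_of_mem (mem_range_self _)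
      linarith
  -- now use first countability of CL X at the point D
  letI : MetricSpace (CL X) := metrizableSpaceMetric (CL X)
  set D' : CL X := ⟨D, ⟨y 0, mem_range_self _⟩, hDclosed⟩ with hD'
  obtain ⟨Nb, hNb⟩ := (𝓝 D').exists_antitone_basis
  have basis := TopologicalSpace.isTopologicalBasis_of_subbasis (locFinTop_eq (X := X))
  have key : ∀ n : ℕ, ∃ q : X, q ∈ W n ∧ q ≠ y n ∧
      ∀ C : CL X, C.carrier = (D \ {y n}) ∪ {q} → C ∈ Nb n := by
    intro n
    obtain ⟨bs, hbsB, hDbs, hbsNb⟩ :=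
      basis.mem_nhds_iff.mp (hNb.mem n)
    obtain ⟨F, ⟨hFfin, hFsub⟩, rfl⟩ := hbsB
    have hG : ∀ s ∈ F, ∃ G : Set X, IsOpen G ∧ y n ∈ G ∧
        ∀ q ∈ G, ∀ C : CL X, C.carrier = (D \ {y n}) ∪ {q} → C ∈ s := by
      intro s hs
      rcases hFsub hs with ⟨V, hV, rfl⟩ | ⟨𝒰, h1, h2, rfl⟩
      · have hDV : D ⊆ V := hDbs _ hs
        refine ⟨V, hV, hDV (mem_range_self _), ?_⟩
        intro q hq C hC
        simp only [mem_setOf_eq, hC]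
        exact union_subset (diff_subset.trans hDV) (singleton_subset_iff.mpr hq)
      · have hDU : ∀ U ∈ 𝒰, (D ∩ U).Nonempty := hDbs _ hs
        have hfin : {U ∈ 𝒰 | y n ∈ U}.Finite := inter_of_locallyFinite h2
        refine ⟨⋂₀ {U ∈ 𝒰 | y n ∈ U}, hfin.isOpen_sInter (fun U hU => h1 U hU.1),
          fun U hU => hU.2, ?_⟩
        intro q hq C hC
        simp only [mem_setOf_eq, hC]
        intro U hU
        by_cases hyn : ∃ m, y m ∈ U ∧ m ≠ n
        · obtain ⟨m, hm, hmn⟩ := hyn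
          exact ⟨y m, Or.inl ⟨mem_range_self _, fun hc => hmn (hyinj hc)⟩, hm⟩
        · push_neg at hyn
          obtain ⟨w, hwD, hwU⟩ := hDU U hU
          obtain ⟨m, rfl⟩ := hwD
          have : m = n := hyn m hwU
          subst this
          exact ⟨q, Or.inr rfl, mem_sInter.mp hq U ⟨hU, hwU⟩⟩
    choose G hGopen hGy hGmem using hG
    haveI := hFfin.to_subtype
    set O : Set X := W n ∩ ⋂ s : F, G s s.2 with hO
    have hOopen : IsOpen O := (hWopen n).inter (isOpen_iInter_of_finite (fun s => hGopen s s.2))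
    have hyO : y n ∈ O := ⟨hyW n, mem_iInter.mpr fun s => hGy s s.2⟩
    have hq : ∃ q ∈ O, q ≠ y n := by
      by_contra hq
      push_neg at hq
      have hsing : O = {y n} := by
        apply Subset.antisymm
        · intro z hz; exact hq z hz
        · simp [singleton_subset_iff, hyO]
      exact hyNI n (hsing ▸ hOopen)
    obtain ⟨q, hqO, hqne⟩ := hq
    refine ⟨q, hqO.1, hqne, ?_⟩
    intro C hC
    apply hbsNb
    intro s hs
    exact hGmem s hs q (mem_iInter.mp hqO.2 ⟨s, hs⟩) C hC
  choose q hqW hqne hqC using key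
  set 𝒱 : Set (Set X) := range (fun n => W n \ {q n}) with h𝒱
  have h𝒩open : IsOpen {A : CL X | ∀ u ∈ 𝒱, (A.carrier ∩ u).Nonempty} := by
    apply isOpen_minus
    · rintro u ⟨n, rfl⟩
      exact (hWopen n).sdiff isClosed_singleton
    · intro z
      obtain ⟨N, hN, m, hm⟩ := hWdisc z
      refine ⟨N, hN, ?_⟩
      have hsub : {i : 𝒱 | ((i : Set X) ∩ N).Nonempty} ⊆
          {i : 𝒱 | (i : Set X) = W m \ {q m}} := by
        rintro ⟨u, k, rfl⟩ hi
        simp only [mem_setOf_eq] at hi ⊢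
        have : k = m := hm k (hi.mono (inter_subset_inter_left N diff_subset))
        rw [this]
      refine (Set.Finite.subset ?_ hsub)
      apply Set.Subsingleton.finite
      rintro ⟨u, hu⟩ h1 ⟨v, hv⟩ h2
      simp only [mem_setOf_eq] at h1 h2
      exact Subtype.ext (h1.trans h2.symm)
  have h𝒩nhds : {A : CL X | ∀ u ∈ 𝒱, (A.carrier ∩ u).Nonempty} ∈ 𝓝 D' := by
    apply h𝒩open.mem_nhds
    rintro u ⟨n, rfl⟩
    exact ⟨y n, mem_range_self _, hyW n, fun hc => hqne n (mem_singleton_iff.mp hc).symm⟩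
  obtain ⟨n, -, hn⟩ := hNb.toHasBasis.mem_iff.mp h𝒩nhds
  set C : CL X := ⟨(D \ {y n}) ∪ {q n},
    ⟨q n, Or.inr rfl⟩,
    (hDnclosed n).union isClosed_singleton⟩ with hC
  have hCmem : C ∈ {A : CL X | ∀ u ∈ 𝒱, (A.carrier ∩ u).Nonempty} := hn (hqC n C rfl)
  obtain ⟨w, hwC, hwW, hwq⟩ := hCmem (W n \ {q n}) ⟨n, rfl⟩
  rcases hwC with ⟨hwD, hwy⟩ | hwq'
  · obtain ⟨m, rfl⟩ := hwD
    exact hwy (by rw [hWD m n hwW]; exact rfl)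
  · exact hwq hwq'

end CLaux

-- chunk 3 : the auxiliary metric for the backward direction
namespace CLaux

section Backward

variable {X : Type*} [MetricSpace X]

/-- distance capped at 1 -/
private noncomputable def d1 (x y : X) : ℝ := min (dist x y) 1

private theorem d1_nonneg (x y : X) : 0 ≤ d1 x y := le_min dist_nonneg zero_le_one
private theorem d1_le_one (x y : X) : d1 x y ≤ 1 := min_le_right _ _
private theorem d1_self (x : X) : d1 x x = 0 := by simp [d1]
private theorem d1_comm (x y : X) : d1 x y = d1 y x := by simp [d1, dist_comm]
private theorem d1_le_dist (x y : X) : d1 x y ≤ dist x y := min_le_left _ _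
private theorem d1_triangle (x y z : X) : d1 x z ≤ d1 x y + d1 y z := by
  have h3 := dist_triangle x y z
  have n1 := dist_nonneg (x := x) (y := y)
  have n2 := dist_nonneg (x := y) (y := z)
  simp only [d1, min_def]
  split_ifs <;> linarith
private theorem dist_lt_of_d1_lt {x y : X} {ε : ℝ} (hε : ε ≤ 1) (h : d1 x y < ε) :
    dist x y < ε := by
  rcases min_cases (dist x y) 1 with ⟨h1, _⟩ | ⟨h1, h2⟩
  · rwa [d1, h1] at h
  · rw [d1, h1] at h; linarith
private theorem d1_lt_of_dist_lt {x y : X} {ε : ℝ} (h : dist x y < ε) : d1 x y < ε :=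
  lt_of_le_of_lt (d1_le_dist x y) h

open scoped Classical in
/-- distance to the set of non-isolated points, capped at 1 -/
private noncomputable def fni (X : Type*) [MetricSpace X] (x : X) : ℝ :=
  if (NI X).Nonempty then min (Metric.infDist x (NI X)) 1 else 1

private theorem fni_nonneg (x : X) : 0 ≤ fni X x := by
  unfold fni; split_ifs
  · exact le_min Metric.infDist_nonneg zero_le_one
  · exact zero_le_one

private theorem fni_le_one (x : X) : fni X x ≤ 1 := by
  unfold fni; split_ifs
  · exact min_le_right _ _
  · exact le_refl _

private theorem min_lip {a b d : ℝ} (h : a ≤ b + d) (hb : 0 ≤ b) (hd : 0 ≤ d) :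
    min a 1 ≤ min b 1 + min d 1 := by
  rcases min_cases a 1 with ⟨h1, _⟩ | ⟨h1, h1'⟩ <;>
  rcases min_cases b 1 with ⟨h2, _⟩ | ⟨h2, h2'⟩ <;>
  rcases min_cases d 1 with ⟨h3, _⟩ | ⟨h3, h3'⟩ <;> rw [h1, h2, h3] <;> linarith

private theorem fni_lip (x y : X) : fni X x ≤ fni X y + d1 x y := by
  unfold fni d1; split_ifs with h
  · exact min_lip Metric.infDist_le_infDist_add_dist Metric.infDist_nonneg dist_nonneg
  · have : (0:ℝ) ≤ min (dist x y) 1 := le_min dist_nonneg zero_le_one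
    linarith

private theorem fni_eq_zero {x : X} (h : x ∈ NI X) : fni X x = 0 := by
  unfold fni
  rw [if_pos ⟨x, h⟩, Metric.infDist_zero_of_mem h]
  simp

private theorem fni_pos {x : X} (h : x ∉ NI X) : 0 < fni X x := by
  unfold fni; split_ifs with hne
  · exact lt_min ((isClosed_NI.notMem_iff_infDist_pos hne).mp h) zero_lt_one
  · exact zero_lt_one

private theorem isolated_of_fni_pos {x : X} (h : 0 < fni X x) : IsOpen ({x} : Set X) := by
  by_contra hc
  rw [(fni_eq_zero hc : fni X x = 0)] at h
  exact lt_irrefl _ h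

private theorem fni_le_infDist {x : X} (h : (NI X).Nonempty) :
    fni X x ≤ Metric.infDist x (NI X) := by
  unfold fni; rw [if_pos h]; exact min_le_left _ _

private theorem fni_le_dist {x p : X} (hp : p ∈ NI X) : fni X x ≤ dist x p :=
  le_trans (fni_le_infDist ⟨p, hp⟩) (Metric.infDist_le_dist_of_mem hp)

private theorem nonempty_NI_of_fni_lt_one {x : X} (h : fni X x < 1) : (NI X).Nonempty := by
  by_contra hc
  rw [fni, if_neg hc] at h
  exact lt_irrefl _ h

private theorem infDist_le_of_fni_le {x : X} {c : ℝ} (h : fni X x ≤ c) (hc : c < 1) :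
    Metric.infDist x (NI X) ≤ c := by
  have hne := nonempty_NI_of_fni_lt_one (lt_of_le_of_lt h hc)
  rw [fni, if_pos hne] at h
  rcases min_cases (Metric.infDist x (NI X)) 1 with ⟨h1, _⟩ | ⟨h1, h2⟩
  · rwa [h1] at h
  · rw [h1] at h; linarith

open scoped Classical in
/-- the auxiliary metric -/
private noncomputable def rho (X : Type*) [MetricSpace X] (x y : X) : ℝ :=
  if x = y then 0 else max (d1 x y) (min (fni X x) (fni X y))

private theorem rho_nonneg (x y : X) : 0 ≤ rho X x y := by
  unfold rho; split_ifs with h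
  · exact le_refl _
  · exact le_trans (d1_nonneg x y) (le_max_left _ _)

private theorem rho_self (x : X) : rho X x x = 0 := by simp [rho]

private theorem rho_comm (x y : X) : rho X x y = rho X y x := by
  unfold rho
  by_cases h : x = y
  · subst h; simp
  · rw [if_neg h, if_neg (Ne.symm h), d1_comm, min_comm]

private theorem d1_le_rho (x y : X) : d1 x y ≤ rho X x y := by
  unfold rho; split_ifs with h
  · subst h; rw [d1_self]
  · exact le_max_left _ _

private theorem rho_le_one (x y : X) : rho X x y ≤ 1 := by
  unfold rho; split_ifs with h
  · norm_num
  · exact max_le (d1_le_one _ _) (le_trans (min_le_left _ _) (fni_le_one _))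

private theorem rho_le_three (x y : X) : rho X x y ≤ 3 :=
  le_trans (rho_le_one x y) (by norm_num)

private theorem rho_pos {x y : X} (h : x ≠ y) : 0 < rho X x y := by
  unfold rho
  rw [if_neg h]
  exact lt_of_lt_of_le (lt_min (dist_pos.mpr h) one_pos) (le_max_left _ _)

private theorem rho_eq_zero_iff {x y : X} : rho X x y = 0 ↔ x = y := by
  constructor
  · intro h
    by_contra hne
    exact absurd h (ne_of_gt (rho_pos hne))
  · intro h; subst h; exact rho_self x

private theorem rho_le_add (x y : X) : rho X x y ≤ d1 x y + fni X x := by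
  unfold rho; split_ifs with h
  · exact add_nonneg (d1_nonneg _ _) (fni_nonneg _)
  · exact max_le (le_add_of_nonneg_right (fni_nonneg _))
      (le_trans (min_le_left _ _) (le_add_of_nonneg_left (d1_nonneg _ _)))

private theorem rho_triangle (x y z : X) : rho X x z ≤ rho X x y + rho X y z := by
  by_cases hxz : x = z
  · subst hxz
    rw [rho_self]
    exact add_nonneg (rho_nonneg _ _) (rho_nonneg _ _)
  by_cases hxy : x = y
  · subst hxy; rw [rho_self, zero_add]
  by_cases hyz : y = z
  · subst hyz; rw [rho_self, add_zero]
  unfold rho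
  rw [if_neg hxz, if_neg hxy, if_neg hyz]
  have hd := d1_triangle x y z
  have hxy' : d1 x y ≤ max (d1 x y) (min (fni X x) (fni X y)) := le_max_left _ _
  have hyz' : d1 y z ≤ max (d1 y z) (min (fni X y) (fni X z)) := le_max_left _ _
  refine max_le (by linarith) ?_
  rcases le_total (fni X x) (fni X y) with h1 | h1
  · -- fy ≥ fx
    have : min (fni X x) (fni X z) ≤ min (fni X x) (fni X y) := by
      exact le_trans (min_le_left _ _) (le_min (le_refl _) h1)
    have h2 : min (fni X x) (fni X y) ≤ max (d1 x y) (min (fni X x) (fni X y)) := le_max_right _ _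
    have h3 : (0:ℝ) ≤ max (d1 y z) (min (fni X y) (fni X z)) :=
      le_trans (d1_nonneg _ _) (le_max_left _ _)
    linarith
  · rcases le_total (fni X z) (fni X y) with h2 | h2
    · -- fy ≥ fz
      have : min (fni X x) (fni X z) ≤ min (fni X y) (fni X z) := by
        exact le_trans (min_le_right _ _) (le_min h2 (le_refl _))
      have h3 : min (fni X y) (fni X z) ≤ max (d1 y z) (min (fni X y) (fni X z)) := le_max_right _ _
      have h4 : (0:ℝ) ≤ max (d1 x y) (min (fni X x) (fni X y)) :=
        le_trans (d1_nonneg _ _) (le_max_left _ _)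
      linarith
    · -- fy < fx, fy < fz
      have h3 : min (fni X x) (fni X z) ≤ fni X x := min_le_left _ _
      have h4 : fni X x ≤ fni X y + d1 x y := fni_lip x y
      have h5 : min (fni X y) (fni X z) = fni X y := min_eq_left h2
      have h6 : fni X y ≤ max (d1 y z) (min (fni X y) (fni X z)) := by
        rw [h5]; exact le_max_right _ _
      linarith

end Backward

end CLaux

-- chunk 4 : gap and Hausdorff-type distance
namespace CLaux

section Backward

variable {X : Type*} [MetricSpace X]

private theorem rho_iso {x y : X} {ε : ℝ} (hε : 0 < ε) (hfx : ε ≤ fni X x) (hne : y ≠ x) :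
    ε / 2 ≤ rho X x y := by
  rcases le_total (ε / 2) (d1 x y) with h | h
  · exact le_trans h (d1_le_rho x y)
  · have h1 : fni X x ≤ fni X y + d1 x y := fni_lip x y
    have h2 : ε / 2 ≤ fni X y := by linarith
    have h3 : ε / 2 ≤ min (fni X x) (fni X y) := le_min (by linarith) h2
    refine le_trans h3 ?_
    unfold rho
    rw [if_neg (Ne.symm hne)]
    exact le_max_right _ _

private theorem rho_eq_d1_of_NI {x : X} (h : x ∈ NI X) (y : X) : rho X x y = d1 x y := by
  unfold rho; split_ifs with he
  · subst he; rw [d1_self]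
  · rw [fni_eq_zero h, min_comm]
    rw [max_eq_left]
    exact le_trans (min_le_right _ _) (d1_nonneg _ _)

/-- ρ-balls are neighborhoods -/
private theorem rho_nhds {U : Set X} (hU : IsOpen U) {x : X} (hx : x ∈ U) :
    ∃ ε > 0, ∀ y, rho X x y < ε → y ∈ U := by
  by_cases hNI : x ∈ NI X
  · obtain ⟨ε, hε, hb⟩ := Metric.isOpen_iff.mp hU x hx
    refine ⟨min ε 1, lt_min hε one_pos, fun y hy => ?_⟩
    rw [rho_eq_d1_of_NI hNI] at hy
    have : dist x y < min ε 1 := dist_lt_of_d1_lt (min_le_right _ _) hy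
    rw [dist_comm] at this
    exact hb (lt_of_lt_of_le this (min_le_left _ _))
  · have hf : 0 < fni X x := fni_pos hNI
    refine ⟨fni X x / 2, by linarith, fun y hy => ?_⟩
    by_cases hxy : y = x
    · subst hxy; exact hx
    · exact absurd hy (not_lt.mpr (rho_iso hf (le_refl _) hxy))

/-- every point has arbitrarily small ρ-ball neighborhoods -/
private theorem nhds_rho_small {ε : ℝ} (hε : 0 < ε) (z : X) :
    ∃ N ∈ 𝓝 z, ∀ y ∈ N, rho X z y < ε := by
  by_cases hNI : z ∈ NI X
  · refine ⟨Metric.ball z ε, Metric.ball_mem_nhds _ hε, fun y hy => ?_⟩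
    rw [rho_eq_d1_of_NI hNI, d1_comm]
    exact d1_lt_of_dist_lt hy
  · refine ⟨{z}, (isolated_of_fni_pos (fni_pos hNI)).mem_nhds rfl, fun y hy => ?_⟩
    rw [mem_singleton_iff.mp hy, rho_self]
    exact hε

private theorem isOpen_of_rho {O : Set X}
    (h : ∀ x ∈ O, ∃ ε > 0, ∀ y, rho X x y < ε → y ∈ O) : IsOpen O := by
  rw [isOpen_iff_mem_nhds]
  intro x hx
  obtain ⟨ε, hε, hb⟩ := h x hx
  obtain ⟨N, hN, hNs⟩ := nhds_rho_small hε x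
  exact Filter.mem_of_superset hN (fun y hy => hb y (hNs y hy))

-- the gap and Hausdorff-type distance
private noncomputable def gap (x : X) (B : Set X) : ℝ := ⨅ b : B, rho X x b

private theorem gap_bddBelow (x : X) (B : Set X) :
    BddBelow (range fun b : B => rho X x b) :=
  ⟨0, by rintro r ⟨b, rfl⟩; exact rho_nonneg _ _⟩

private theorem gap_nonneg {x : X} {B : Set X} (hB : B.Nonempty) : 0 ≤ gap x B := by
  haveI := hB.to_subtype
  exact le_ciInf fun b => rho_nonneg _ _

private theorem gap_le {x : X} {B : Set X} {b : X} (hb : b ∈ B) : gap x B ≤ rho X x b :=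
  ciInf_le (gap_bddBelow x B) ⟨b, hb⟩

private theorem gap_lt {x : X} {B : Set X} {ε : ℝ} (hB : B.Nonempty) (h : gap x B < ε) :
    ∃ b ∈ B, rho X x b < ε := by
  haveI := hB.to_subtype
  obtain ⟨b, hb⟩ := exists_lt_of_ciInf_lt h
  exact ⟨b, b.2, hb⟩

private theorem le_gap {x : X} {B : Set X} {c : ℝ} (hB : B.Nonempty)
    (h : ∀ b ∈ B, c ≤ rho X x b) : c ≤ gap x B := by
  haveI := hB.to_subtype
  exact le_ciInf fun b => h b b.2

private theorem gap_le_three {x : X} {B : Set X} (hB : B.Nonempty) : gap x B ≤ 3 := by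
  obtain ⟨b, hb⟩ := hB
  exact le_trans (gap_le hb) (rho_le_three _ _)

private theorem gap_triangle {x y : X} {B : Set X} (hB : B.Nonempty) :
    gap x B ≤ rho X x y + gap y B := by
  haveI := hB.to_subtype
  rw [← sub_le_iff_le_add']
  refine le_ciInf fun b => ?_
  rw [sub_le_iff_le_add']
  calc gap x B ≤ rho X x (b : X) := gap_le b.2
    _ ≤ rho X x y + rho X y b := rho_triangle _ _ _

private theorem gap_zero_of_mem {x : X} {B : Set X} (hx : x ∈ B) : gap x B = 0 :=
  le_antisymm (by simpa [rho_self] using gap_le (x := x) hx) (gap_nonneg ⟨x, hx⟩)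

variable (X) in
private noncomputable def hd (A B : CL X) : ℝ :=
  max (⨆ a : A.carrier, gap (a : X) B.carrier) (⨆ b : B.carrier, gap (b : X) A.carrier)

private theorem sup_gap_bddAbove (A B : CL X) :
    BddAbove (range fun a : A.carrier => gap (a : X) B.carrier) :=
  ⟨3, by rintro r ⟨a, rfl⟩; exact gap_le_three B.nonempty'⟩

private theorem sup_gap_le {A B : CL X} {c : ℝ}
    (h : ∀ a ∈ A.carrier, gap a B.carrier ≤ c) :
    (⨆ a : A.carrier, gap (a : X) B.carrier) ≤ c := by
  haveI := A.nonempty'.to_subtype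
  exact ciSup_le fun a => h a a.2

private theorem gap_le_hd_left {A B : CL X} {a : X} (ha : a ∈ A.carrier) :
    gap a B.carrier ≤ hd X A B :=
  le_trans (le_ciSup (sup_gap_bddAbove A B) ⟨a, ha⟩) (le_max_left _ _)

private theorem gap_le_hd_right {A B : CL X} {b : X} (hb : b ∈ B.carrier) :
    gap b A.carrier ≤ hd X A B :=
  le_trans (le_ciSup (sup_gap_bddAbove B A) ⟨b, hb⟩) (le_max_right _ _)

private theorem hd_self (A : CL X) : hd X A A = 0 := by
  have h : ∀ a ∈ A.carrier, gap a A.carrier ≤ 0 := fun a ha => le_of_eq (gap_zero_of_mem ha)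
  have h0 : (0:ℝ) ≤ hd X A A := le_trans (gap_nonneg A.nonempty') (gap_le_hd_left A.nonempty'.choose_spec)
  exact le_antisymm (max_le (sup_gap_le h) (sup_gap_le h)) h0

private theorem hd_comm (A B : CL X) : hd X A B = hd X B A := max_comm _ _

private theorem hd_nonneg (A B : CL X) : 0 ≤ hd X A B :=
  le_trans (gap_nonneg B.nonempty') (gap_le_hd_left A.nonempty'.choose_spec)

private theorem hd_triangle (A B C : CL X) : hd X A C ≤ hd X A B + hd X B C := by
  have key : ∀ (P Q R : CL X), ∀ x ∈ P.carrier,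
      gap x R.carrier ≤ hd X P Q + hd X Q R := by
    intro P Q R x hx
    refine le_of_forall_pos_le_add fun δ hδ => ?_
    have h1 : gap x Q.carrier < hd X P Q + δ :=
      lt_of_le_of_lt (gap_le_hd_left hx) (by linarith)
    obtain ⟨q, hq, hq'⟩ := gap_lt Q.nonempty' h1
    have h2 : gap x R.carrier ≤ rho X x q + gap q R.carrier := gap_triangle R.nonempty'
    have h3 : gap q R.carrier ≤ hd X Q R := gap_le_hd_left hq
    linarith
  refine max_le (sup_gap_le fun x hx => key A B C x hx) (sup_gap_le fun x hx => ?_)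
  have := key C B A x hx
  rw [hd_comm C B, hd_comm B A] at this
  linarith

end Backward

end CLaux

-- chunk 5
namespace CLaux

section Backward

variable {X : Type*} [MetricSpace X]

private theorem hd_eq {A B : CL X} (h : hd X A B = 0) : A = B := by
  have key : ∀ P Q : CL X, (⨆ p : P.carrier, gap (p : X) Q.carrier) ≤ 0 →
      P.carrier ⊆ Q.carrier := by
    intro P Q hPQ x hx
    have h1 : gap x Q.carrier ≤ 0 := le_trans (le_ciSup (sup_gap_bddAbove P Q) ⟨x, hx⟩) hPQ
    rw [← Q.isClosed'.closure_eq]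
    rw [Metric.mem_closure_iff]
    intro ε hε
    have h2 : gap x Q.carrier < min ε 1 := lt_of_le_of_lt h1 (lt_min hε one_pos)
    obtain ⟨b, hb, hρ⟩ := gap_lt Q.nonempty' h2
    refine ⟨b, hb, ?_⟩
    have := dist_lt_of_d1_lt (min_le_right ε 1)
      (lt_of_le_of_lt (d1_le_rho x b) hρ)
    exact lt_of_lt_of_le this (min_le_left _ _)
  rw [hd] at h
  apply CL.ext'
  exact Subset.antisymm (key A B (le_trans (le_max_left _ _) h.le))
    (key B A (le_trans (le_max_right _ _) h.le))

private theorem lim5 : Filter.Tendsto (fun n : ℕ => (5:ℝ) / (n + 1)) atTop (𝓝 0) := by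
  have := tendsto_one_div_add_atTop_nhds_zero_nat (𝕜 := ℝ)
  have h5 : Filter.Tendsto (fun n : ℕ => (5:ℝ) * (1 / (n + 1))) atTop (𝓝 (5 * 0)) :=
    this.const_mul 5
  simpa [mul_one_div, div_eq_mul_inv] using h5

private theorem tendsto_of_dist_bound {a b : ℕ → X} {p : X}
    (ha : Filter.Tendsto a atTop (𝓝 p))
    (h : ∀ᶠ n in atTop, dist (a n) (b n) ≤ 5 / (n + 1)) :
    Filter.Tendsto b atTop (𝓝 p) := by
  refine ha.congr_dist (squeeze_zero' (Filter.Eventually.of_forall fun n => dist_nonneg) h lim5)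

private theorem exists_cluster (hc : IsCompact (NI X)) (a : ℕ → X)
    (hf : ∀ n, fni X (a n) ≤ 4 / (n + 1)) :
    ∃ p ∈ NI X, ∃ φ : ℕ → ℕ, StrictMono φ ∧ Filter.Tendsto (a ∘ φ) atTop (𝓝 p) := by
  have hne : (NI X).Nonempty :=
    nonempty_NI_of_fni_lt_one (lt_of_le_of_lt (hf 4) (by norm_num))
  have hsel : ∀ n : ℕ, ∃ p ∈ NI X, dist (a n) p < Metric.infDist (a n) (NI X) + 1 / (n+1) := by
    intro n
    apply (Metric.infDist_lt_iff hne).mp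
    have : (0:ℝ) < 1 / (n+1) := by positivity
    linarith
  choose p hpNI hp using hsel
  obtain ⟨q, hqNI, φ, hφ, hφt⟩ := hc.tendsto_subseq hpNI
  refine ⟨q, hqNI, φ, hφ, ?_⟩
  apply tendsto_of_dist_bound hφt
  rw [Filter.eventually_atTop]
  refine ⟨4, fun k hk => ?_⟩
  have hk4 : (4:ℕ) ≤ φ k := le_trans hk (hφ.le_apply)
  have hlt1 : (4:ℝ) / (φ k + 1) < 1 := by
    rw [div_lt_one (by positivity)]
    have : (4:ℝ) ≤ (φ k : ℝ) := by exact_mod_cast hk4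
    linarith
  have hinf : Metric.infDist (a (φ k)) (NI X) ≤ 4 / (φ k + 1) :=
    infDist_le_of_fni_le (hf (φ k)) hlt1
  have hd' : dist (a (φ k)) (p (φ k)) < 4 / (φ k + 1) + 1 / (φ k + 1) := by
    have := hp (φ k); linarith
  have hmono : (5:ℝ) / (φ k + 1) ≤ 5 / (k + 1) := by
    apply div_le_div_of_nonneg_left (by norm_num) (by positivity)
    have : (k:ℝ) ≤ (φ k : ℝ) := by exact_mod_cast hφ.le_apply
    linarith
  rw [dist_comm]
  have : (4:ℝ) / (φ k + 1) + 1 / (φ k + 1) = 5 / (φ k + 1) := by ring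
  rw [this] at hd'
  exact le_trans hd'.le hmono

private theorem fni_le_of_rho_lt {x y : X} (hne : y ≠ x) {c : ℝ} (hρ : rho X x y < c) :
    fni X x ≤ 2 * c := by
  by_cases h0 : fni X x ≤ 0
  · have := rho_nonneg (X := X) x y
    linarith
  · push_neg at h0
    have := rho_iso h0 (le_refl _) hne
    linarith

private theorem plus_open_rho (hc : IsCompact (NI X)) {V : Set X} (hV : IsOpen V)
    (A : CL X) (hA : A.carrier ⊆ V) :
    ∃ ε > 0, ∀ B : CL X, hd X A B < ε → B.carrier ⊆ V := by
  by_contra hcon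
  push_neg at hcon
  have hsel : ∀ n : ℕ, ∃ B : CL X, hd X A B < 1 / (n+1) ∧ ∃ b ∈ B.carrier, b ∉ V := by
    intro n
    obtain ⟨B, hB1, hB2⟩ := hcon (1 / (n+1)) (by positivity)
    rw [not_subset] at hB2
    exact ⟨B, hB1, hB2⟩
  choose B hB b hbB hbV using hsel
  have hsel2 : ∀ n : ℕ, ∃ a ∈ A.carrier, rho X (b n) a < 1 / (n+1) := by
    intro n
    exact gap_lt A.nonempty' (lt_of_le_of_lt (gap_le_hd_right (hbB n)) (hB n))
  choose a haA hab using hsel2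
  have hfa : ∀ n, fni X (a n) ≤ 4 / (n+1) := by
    intro n
    have hne : b n ≠ a n := fun he => hbV n (he ▸ hA (haA n))
    have hab' := hab n
    rw [rho_comm] at hab'
    have h1 := fni_le_of_rho_lt hne hab'
    rw [mul_one_div] at h1
    have h2 : (2:ℝ) / (n+1) ≤ 4 / (n+1) := by gcongr <;> norm_num
    linarith
  obtain ⟨p, hpNI, φ, hφ, hφt⟩ := exists_cluster hc a hfa
  have hpA : p ∈ A.carrier :=
    A.isClosed'.mem_of_tendsto hφt (Filter.Eventually.of_forall fun k => haA _)
  have hbt : Filter.Tendsto (b ∘ φ) atTop (𝓝 p) := by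
    apply tendsto_of_dist_bound hφt
    rw [Filter.eventually_atTop]
    refine ⟨1, fun k hk => ?_⟩
    have h1 : (1:ℝ) / (φ k + 1) ≤ 1 := by
      rw [div_le_one (by positivity)]
      have : (0:ℝ) ≤ (φ k : ℝ) := by positivity
      linarith
    have h2 : d1 (a (φ k)) (b (φ k)) < 1 / (φ k + 1) := by
      rw [d1_comm]
      exact lt_of_le_of_lt (d1_le_rho _ _) (hab (φ k))
    have h3 := dist_lt_of_d1_lt h1 h2
    have hmono : (1:ℝ) / (φ k + 1) ≤ 5 / (k + 1) := by
      apply div_le_div₀ (by norm_num) (by norm_num) (by positivity)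
      have : (k:ℝ) ≤ (φ k : ℝ) := by exact_mod_cast hφ.le_apply
      linarith
    exact le_trans h3.le hmono
  have : ∀ᶠ k in atTop, (b ∘ φ) k ∈ V := hbt.eventually (hV.eventually_mem (hA hpA))
  obtain ⟨k, hk⟩ := this.exists
  exact hbV (φ k) hk

end Backward

end CLaux

-- chunk 6 : locally finite hitting sets are rho-open
namespace CLaux

section Backward

variable {X : Type*} [MetricSpace X]

private theorem minus_open_rho (hc : IsCompact (NI X)) {𝒰 : Set (Set X)}
    (h1 : ∀ U ∈ 𝒰, IsOpen U) (h2 : LocallyFinite (fun U : 𝒰 => (U : Set X)))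
    (A : CL X) (hA : ∀ U ∈ 𝒰, (A.carrier ∩ U).Nonempty) :
    ∃ ε > 0, ∀ B : CL X, hd X A B < ε → ∀ U ∈ 𝒰, (B.carrier ∩ U).Nonempty := by
  suffices claim : ∃ ε > 0, ∀ U ∈ 𝒰, ∃ a ∈ A.carrier ∩ U, ∀ y, rho X a y < ε → y ∈ U by
    obtain ⟨ε, hε, hcl⟩ := claim
    refine ⟨ε, hε, fun B hB U hU => ?_⟩
    obtain ⟨a, ⟨haA, haU⟩, hball⟩ := hcl U hU
    obtain ⟨bb, hbB, hρ⟩ := gap_lt B.nonempty'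
      (lt_of_le_of_lt (gap_le_hd_left haA) hB)
    exact ⟨bb, hbB, hball bb hρ⟩
  by_contra hcon
  push_neg at hcon
  have hsel : ∀ n : ℕ, ∃ U ∈ 𝒰, ∀ a ∈ A.carrier ∩ U, ∃ y, rho X a y < 1 / (n+1) ∧ y ∉ U := by
    intro n
    obtain ⟨U, hU, hU2⟩ := hcon (1 / (n+1)) (by positivity)
    refine ⟨U, hU, fun a ha => ?_⟩
    obtain ⟨y, hy1, hy2⟩ := hU2 a ha
    exact ⟨y, hy1, hy2⟩
  choose U hU𝒰 hUbad using hsel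
  have hselA : ∀ n : ℕ, ∃ a, a ∈ A.carrier ∩ U n := fun n => hA (U n) (hU𝒰 n)
  choose a haAU using hselA
  have hfa : ∀ n, fni X (a n) ≤ 4 / (n+1) := by
    intro n
    obtain ⟨y, hy1, hy2⟩ := hUbad n (a n) (haAU n)
    have hne : y ≠ a n := fun he => hy2 (he ▸ (haAU n).2)
    have h1 := fni_le_of_rho_lt hne hy1
    rw [mul_one_div] at h1
    have h2 : (2:ℝ) / (n+1) ≤ 4 / (n+1) := by gcongr; norm_num
    linarith
  obtain ⟨p, hpNI, φ, hφ, hφt⟩ := exists_cluster hc a hfa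
  obtain ⟨N, hN, hNfin⟩ := h2 p
  obtain ⟨K, hK⟩ := Filter.eventually_atTop.mp (hφt.eventually hN)
  -- pigeonhole: some member of 𝒰 occurs infinitely often
  have hpig : ∃ W ∈ 𝒰, {k : ℕ | K ≤ k ∧ U (φ k) = W}.Infinite := by
    by_contra hp
    push_neg at hp
    have hsub : Set.Ici K ⊆ ⋃ i ∈ {i : 𝒰 | ((i : Set X) ∩ N).Nonempty},
        {k : ℕ | K ≤ k ∧ U (φ k) = (i : Set X)} := by
      intro k hk
      have hmem : a (φ k) ∈ N := hK k hk
      refine mem_biUnion (show (⟨U (φ k), hU𝒰 (φ k)⟩ : 𝒰) ∈ _ from ?_) ⟨hk, rfl⟩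
      exact ⟨a (φ k), (haAU (φ k)).2, hmem⟩
    have hfin : (⋃ i ∈ {i : 𝒰 | ((i : Set X) ∩ N).Nonempty},
        {k : ℕ | K ≤ k ∧ U (φ k) = (i : Set X)}).Finite := by
      refine Set.Finite.biUnion hNfin fun i hi => ?_
      exact hp (i : Set X) i.2
    exact Set.Ici_infinite K (hfin.subset hsub)
  obtain ⟨W, hW𝒰, hWinf⟩ := hpig
  obtain ⟨astar, hastar⟩ := hA W hW𝒰
  obtain ⟨ε', hε', hball⟩ := rho_nhds (h1 W hW𝒰) hastar.2
  obtain ⟨M, hM⟩ := exists_nat_one_div_lt hε'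
  obtain ⟨k, hkS, hkM⟩ : ∃ k, (K ≤ k ∧ U (φ k) = W) ∧ M ≤ k := by
    obtain ⟨k, hk⟩ := (hWinf.diff (Set.finite_Iio M)).nonempty
    exact ⟨k, hk.1, le_of_not_gt (fun hlt => hk.2 hlt)⟩
  set n := φ k with hn
  have hnM : M ≤ n := le_trans hkM hφ.le_apply
  obtain ⟨y, hy1, hy2⟩ := hUbad n astar (by rw [hkS.2]; exact hastar)
  apply hy2
  rw [hkS.2]
  apply hball
  have hmono : (1:ℝ) / (n+1) ≤ 1 / (M+1) :=
    one_div_le_one_div_of_le (by positivity)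
      (by exact_mod_cast Nat.add_le_add_right hnM 1)
  linarith

end Backward

end CLaux

-- chunk 7 : hd-balls contain open sets
namespace CLaux

section Backward

variable {X : Type*} [MetricSpace X]

private theorem min_fni_le_rho {x y : X} (h : x ≠ y) :
    min (fni X x) (fni X y) ≤ rho X x y := by
  unfold rho
  rw [if_neg h]
  exact le_max_right _ _

private theorem hd_ball_nhds (hc : IsCompact (NI X)) (A : CL X) {ε : ℝ} (hε : 0 < ε) :
    ∃ O : Set (CL X), IsOpen O ∧ A ∈ O ∧ ∀ B ∈ O, hd X A B < ε := by
  classical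
  set γ : ℝ := min ε 1 / 32 with hγdef
  have hγ : 0 < γ := by
    have := lt_min hε one_pos
    positivity
  have hγ1 : 32 * γ ≤ ε := by
    have := min_le_left ε 1
    rw [hγdef]; linarith
  have hγ2 : 32 * γ ≤ 1 := by
    have := min_le_right ε 1
    rw [hγdef]; linarith
  -- the enlargement
  set V : Set X := {x | ∃ a ∈ A.carrier, rho X x a < γ} with hVdef
  have hVopen : IsOpen V := by
    apply isOpen_of_rho
    rintro x ⟨a, ha, hxa⟩
    refine ⟨γ - rho X x a, by linarith, fun y hy => ⟨a, ha, ?_⟩⟩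
    have h1 : rho X y a ≤ rho X y x + rho X x a := rho_triangle _ _ _
    rw [rho_comm y x] at h1
    linarith
  have hAV : A.carrier ⊆ V := fun a ha => ⟨a, ha, by rw [rho_self]; exact hγ⟩
  -- the far isolated points of A
  set S₁ : Set X := {a ∈ A.carrier | 2 * γ ≤ fni X a} with hS₁def
  -- cover the compact NI X with finitely many γ-balls
  obtain ⟨T, hT1, hT2⟩ := hc.elim_nhds_subcover (fun p => Metric.ball p γ)
    (fun p _ => Metric.ball_mem_nhds p hγ)
  set a₀ : X := A.nonempty'.choose with ha₀def
  have ha₀ : a₀ ∈ A.carrier := A.nonempty'.choose_spec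
  set σ : X → Set X := fun t =>
    if h : (A.carrier ∩ Metric.ball t (4 * γ)).Nonempty then Metric.ball h.choose γ
    else Metric.ball a₀ γ with hσdef
  have hσball : ∀ t, ∃ s ∈ A.carrier, σ t = Metric.ball s γ := by
    intro t
    by_cases h : (A.carrier ∩ Metric.ball t (4 * γ)).Nonempty
    · exact ⟨h.choose, h.choose_spec.1, by rw [hσdef]; simp only [dif_pos h]⟩
    · exact ⟨a₀, ha₀, by rw [hσdef]; simp only [dif_neg h]⟩
  set 𝒰 : Set (Set X) := ((fun a => ({a} : Set X)) '' S₁) ∪ (σ '' (T : Set X)) with h𝒰def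
  have h𝒰open : ∀ u ∈ 𝒰, IsOpen u := by
    rintro u (⟨a, ha, rfl⟩ | ⟨t, ht, rfl⟩)
    · exact isolated_of_fni_pos (lt_of_lt_of_le (by linarith) ha.2)
    · obtain ⟨s, _, hs⟩ := hσball t
      rw [hs]; exact Metric.isOpen_ball
  have h𝒰meets : ∀ u ∈ 𝒰, (A.carrier ∩ u).Nonempty := by
    rintro u (⟨a, ha, rfl⟩ | ⟨t, ht, rfl⟩)
    · exact ⟨a, ha.1, rfl⟩
    · obtain ⟨s, hsA, hs⟩ := hσball t
      exact ⟨s, hsA, by rw [hs]; exact Metric.mem_ball_self hγ⟩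
  have h𝒰lf : LocallyFinite (fun u : 𝒰 => (u : Set X)) := by
    intro z
    obtain ⟨N, hN, hNball⟩ := nhds_rho_small hγ z
    refine ⟨N, hN, ?_⟩
    have hsub : {i : 𝒰 | ((i : Set X) ∩ N).Nonempty} ⊆
        Subtype.val ⁻¹' ((σ '' (T : Set X)) ∪ ((fun a => ({a} : Set X)) '' {a ∈ S₁ | a ∈ N})) := by
      rintro ⟨u, hu𝒰⟩ hi
      simp only [mem_setOf_eq] at hi
      rcases hu𝒰 with ⟨a, ha, rfl⟩ | hu
      · obtain ⟨w, hw1, hw2⟩ := hi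
        rw [mem_singleton_iff] at hw1
        subst hw1
        exact Or.inr ⟨w, ⟨ha, hw2⟩, rfl⟩
      · exact Or.inl hu
    refine Set.Finite.subset (Set.Finite.preimage Subtype.val_injective.injOn ?_) hsub
    refine Set.Finite.union (T.finite_toSet.image σ) (Set.Finite.image _ ?_)
    apply Set.Subsingleton.finite
    intro p hp q hq
    by_contra hne
    have h1 : rho X p q ≤ rho X p z + rho X z q := rho_triangle _ _ _
    rw [rho_comm p z] at h1
    have h2 := hNball p hp.2
    have h3 := hNball q hq.2
    have h4 : 2 * γ ≤ rho X p q :=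
      le_trans (le_min hp.1.2 hq.1.2) (min_fni_le_rho hne)
    linarith
  refine ⟨{B : CL X | B.carrier ⊆ V} ∩ {B : CL X | ∀ u ∈ 𝒰, (B.carrier ∩ u).Nonempty},
    (isOpen_plus hVopen).inter (isOpen_minus h𝒰open h𝒰lf), ⟨hAV, h𝒰meets⟩, ?_⟩
  rintro B ⟨hBV, hB𝒰⟩
  have hright : (⨆ b : B.carrier, gap (b : X) A.carrier) ≤ γ := by
    apply sup_gap_le
    intro b hb
    obtain ⟨a, haA, hba⟩ := hBV hb
    exact le_trans (gap_le haA) hba.le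
  have hleft : (⨆ a : A.carrier, gap (a : X) B.carrier) ≤ 15 * γ := by
    apply sup_gap_le
    intro a ha
    by_cases hfa : 2 * γ ≤ fni X a
    · -- a is a far isolated point, so a ∈ B
      have hmem : ({a} : Set X) ∈ 𝒰 := Or.inl ⟨a, ⟨ha, hfa⟩, rfl⟩
      obtain ⟨w, hwB, hwa⟩ := hB𝒰 _ hmem
      rw [mem_singleton_iff] at hwa
      subst hwa
      rw [gap_zero_of_mem hwB]
      positivity
    · push_neg at hfa
      have hγlt1 : 2 * γ < 1 := by linarith
      have hinf : Metric.infDist a (NI X) ≤ 2 * γ :=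
        infDist_le_of_fni_le (le_of_lt hfa) hγlt1
      have hNIne : (NI X).Nonempty := nonempty_NI_of_fni_lt_one (by linarith [fni_le_one (X := X) a] <;> linarith)
      obtain ⟨p, hpNI, hap⟩ := (Metric.infDist_lt_iff hNIne).mp
        (lt_of_le_of_lt hinf (by linarith : 2*γ < 3*γ))
      obtain ⟨t, htT, hpt⟩ := mem_iUnion₂.mp (hT2 hpNI)
      rw [Metric.mem_ball] at hpt
      have hat : dist a t < 4 * γ :=
        lt_of_le_of_lt (dist_triangle a p t) (by linarith)
      have hne : (A.carrier ∩ Metric.ball t (4 * γ)).Nonempty :=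
        ⟨a, ha, Metric.mem_ball.mpr hat⟩
      set s : X := hne.choose with hsdef
      have hsprop := hne.choose_spec
      have hσt : σ t = Metric.ball s γ := by rw [hσdef]; simp only [dif_pos hne]; rfl
      have hst : dist s t < 4 * γ := Metric.mem_ball.mp hsprop.2
      have hfs : fni X s ≤ 4 * γ := by
        have h1 : fni X s ≤ dist s t := fni_le_dist (hT1 t htT)
        linarith
      obtain ⟨b, hbB, hbs⟩ := hB𝒰 (σ t) (Or.inr ⟨t, htT, rfl⟩)
      rw [hσt, Metric.mem_ball] at hbs
      have has : dist a s ≤ dist a t + dist t s := dist_triangle _ _ _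
      rw [dist_comm t s] at has
      have h1 : rho X a s ≤ d1 a s + fni X a := rho_le_add a s
      have h2 : rho X s b ≤ d1 s b + fni X s := rho_le_add s b
      have h3 : d1 a s ≤ dist a s := d1_le_dist _ _
      have h4 : d1 s b ≤ dist s b := d1_le_dist _ _
      have h5 : dist s b = dist b s := dist_comm _ _
      have htri : rho X a b ≤ rho X a s + rho X s b := rho_triangle _ _ _
      have : rho X a b ≤ 15 * γ := by
        rw [h5] at h4
        linarith
      exact le_trans (gap_le hbB) this
  have hmax : hd X A B ≤ 15 * γ := max_le (by linarith) (by linarith)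
  linarith

end Backward

end CLaux

-- chunk 8 : final assembly
namespace CLaux

section Backward

variable {X : Type*} [MetricSpace X]

private theorem hd_open_iff (hc : IsCompact (NI X)) (s : Set (CL X)) :
    IsOpen s ↔ ∀ A ∈ s, ∃ ε > 0, ∀ B, hd X A B < ε → B ∈ s := by
  constructor
  · intro hs
    have hs' : TopologicalSpace.GenerateOpen
        ({S | ∃ U : Set X, IsOpen U ∧ S = {A : CL X | A.carrier ⊆ U}} ∪
         {S | ∃ 𝒰 : Set (Set X), (∀ U ∈ 𝒰, IsOpen U) ∧
            LocallyFinite (fun U : 𝒰 => (U : Set X)) ∧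
            S = {A : CL X | ∀ U ∈ 𝒰, (A.carrier ∩ U).Nonempty}}) s := hs
    clear hs
    induction hs' with
    | basic t ht =>
      rcases ht with ⟨V, hV, rfl⟩ | ⟨𝒰, h1, h2, rfl⟩
      · intro A hA
        obtain ⟨ε, hε, h⟩ := plus_open_rho hc hV A hA
        exact ⟨ε, hε, fun B hB => h B hB⟩
      · intro A hA
        obtain ⟨ε, hε, h⟩ := minus_open_rho hc h1 h2 A hA
        exact ⟨ε, hε, fun B hB => h B hB⟩
    | univ => exact fun A _ => ⟨1, one_pos, fun _ _ => trivial⟩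
    | inter u v hu hv ihu ihv =>
      intro A hA
      obtain ⟨ε1, hε1, h1⟩ := ihu A hA.1
      obtain ⟨ε2, hε2, h2⟩ := ihv A hA.2
      exact ⟨min ε1 ε2, lt_min hε1 hε2, fun B hB =>
        ⟨h1 B (lt_of_lt_of_le hB (min_le_left _ _)),
         h2 B (lt_of_lt_of_le hB (min_le_right _ _))⟩⟩
    | sUnion S hS ih =>
      intro A hA
      obtain ⟨t, htS, hAt⟩ := hA
      obtain ⟨ε, hε, h⟩ := ih t htS A hAt
      exact ⟨ε, hε, fun B hB => ⟨t, htS, h B hB⟩⟩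
  · intro h
    rw [isOpen_iff_forall_mem_open]
    intro A hA
    obtain ⟨ε, hε, hball⟩ := h A hA
    obtain ⟨O, hO, hAO, hOball⟩ := hd_ball_nhds hc A hε
    exact ⟨O, fun B hB => hball B (hOball B hB), hO, hAO⟩

private theorem metrizable_CL_of_compact (hc : IsCompact (NI X)) :
    MetrizableSpace (CL X) :=
  by
    letI m : MetricSpace (CL X) := MetricSpace.ofDistTopology (hd X) hd_self hd_comm hd_triangle
      (fun s => hd_open_iff hc s) (fun _ _ h => hd_eq h)
    exact (inferInstance : @MetrizableSpace (CL X) m.toUniformSpace.toTopologicalSpace)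

end Backward

end CLaux


theorem metrizable_CL_locFin_iff {X : Type*} [TopologicalSpace X] [T2Space X] :
    TopologicalSpace.MetrizableSpace (CL X) ↔
      (TopologicalSpace.MetrizableSpace X ∧ IsCompact (NI X)) := by
  constructor
  · intro h
    haveI := h
    haveI hX : MetrizableSpace X := CLaux.metrizable_X_of_CL
    exact ⟨hX, CLaux.compact_NI_of_CL⟩
  · rintro ⟨hm, hc⟩
    haveI := hm
    letI : MetricSpace X := TopologicalSpace.metrizableSpaceMetric X
    exact CLaux.metrizable_CL_of_compact hc
end

section
/- For a Hausdorff space X, the hyperspace (CL(X), τ_locfin) is first-countable if and only if every nonempty closed subset of X has a countable neighborhood base in X (X is a D_1-space) and the subspace NI(X) of non-isolated points is hereditarily separable. -/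
open Set TopologicalSpace

/-- Every closed subset has a countable neighborhood base consisting of open sets. -/
def D1Space (X : Type*) [TopologicalSpace X] : Prop :=
  ∀ A : Set X, IsClosed A → A.Nonempty →
    ∃ B : ℕ → Set X, (∀ n, IsOpen (B n) ∧ A ⊆ B n) ∧
      ∀ U : Set X, IsOpen U → A ⊆ U → ∃ n, B n ⊆ U

/-- A subset is hereditarily separable if each of its subsets has a countable
relatively dense subset. -/
def HereditarilySeparable {X : Type*} [TopologicalSpace X] (A : Set X) : Prop :=
  ∀ s ⊆ A, ∃ c ⊆ s, c.Countable ∧ s ⊆ closure c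

/-! ### Auxiliary machinery for the locally finite topology -/

section Aux

open Filter Topology

variable {X : Type*} [TopologicalSpace X]

/-- The subbasis of the locally finite topology. -/
def lfSub (X : Type*) [TopologicalSpace X] : Set (Set (CL X)) :=
  ({S | ∃ U : Set X, IsOpen U ∧ S = {A : CL X | A.carrier ⊆ U}} ∪
   {S | ∃ 𝒰 : Set (Set X), (∀ U ∈ 𝒰, IsOpen U) ∧
      LocallyFinite (fun U : 𝒰 => (U : Set X)) ∧
      S = {A : CL X | ∀ U ∈ 𝒰, (A.carrier ∩ U).Nonempty}})

/-- The "plus" subbasic set `U⁺`. -/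
def plusSet {X : Type*} [TopologicalSpace X] (U : Set X) : Set (CL X) :=
  {A : CL X | A.carrier ⊆ U}

/-- The "minus" subbasic set `𝒰⁻`. -/
def minusSet {X : Type*} [TopologicalSpace X] (𝒰 : Set (Set X)) : Set (CL X) :=
  {A : CL X | ∀ U ∈ 𝒰, (A.carrier ∩ U).Nonempty}

lemma lf_eq : (inferInstance : TopologicalSpace (CL X)) = generateFrom (lfSub X) := rfl

lemma isOpen_plusSet {U : Set X} (hU : IsOpen U) : IsOpen (plusSet U) := by
  have h : IsOpen[generateFrom (lfSub X)] (plusSet U) :=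
    isOpen_generateFrom_of_mem (Or.inl ⟨U, hU, rfl⟩)
  exact h

lemma isOpen_minusSet {𝒰 : Set (Set X)} (h : ∀ U ∈ 𝒰, IsOpen U)
    (hlf : LocallyFinite (fun U : 𝒰 => (U : Set X))) : IsOpen (minusSet 𝒰) := by
  have h' : IsOpen[generateFrom (lfSub X)] (minusSet 𝒰) :=
    isOpen_generateFrom_of_mem (Or.inr ⟨𝒰, h, hlf, rfl⟩)
  exact h'

/-- Images of sequences inscribed in a locally finite family are closed. -/
lemma closed_of_locallyFinite_mem [T1Space X] {y : ℕ → X} {W : ℕ → Set X}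
    (hlf : LocallyFinite W) (hmem : ∀ n, y n ∈ W n) (J : Set ℕ) :
    IsClosed (y '' J) := by
  rw [← isOpen_compl_iff]
  rw [isOpen_iff_mem_nhds]
  intro z hz
  obtain ⟨N, hN, hfin⟩ := hlf z
  have hfin' : {n : ℕ | y n ∈ N}.Finite :=
    hfin.subset (fun n hn => ⟨y n, hmem n, hn⟩)
  have hMfin : ((y '' J) ∩ N).Finite := by
    have : (y '' J) ∩ N ⊆ y '' {n | y n ∈ N} := by
      rintro w ⟨⟨n, hnJ, rfl⟩, hwN⟩
      exact ⟨n, hwN, rfl⟩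
    exact (hfin'.image y).subset this
  have hMcl : IsClosed ((y '' J) ∩ N) := hMfin.isClosed
  have hzM : z ∉ (y '' J) ∩ N := fun h => hz h.1
  have : (interior N ∩ ((y '' J) ∩ N)ᶜ) ∈ nhds z := by
    apply Filter.inter_mem
    · exact interior_mem_nhds.mpr hN
    · exact hMcl.isOpen_compl.mem_nhds hzM
  apply Filter.mem_of_superset this
  intro w ⟨hw1, hw2⟩
  intro hwim
  exact hw2 ⟨hwim, interior_subset hw1⟩

/-- Key diagonal lemma: in a T2 `D₁`-space, a selection of non-isolated points from
distinct members of a locally finite family has finite range. -/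
lemma finite_range_of_selection [T2Space X] (hd : D1Space X)
    {ι : Type*} {U : ι → Set X} (hUopen : ∀ i, IsOpen (U i)) (hlf : LocallyFinite U)
    {x : ι → X} (hxU : ∀ i, x i ∈ U i)
    (hxNI : ∀ i, x i ∈ NI X) : (Set.range x).Finite := by
  classical
  by_contra hinf
  rw [← Set.not_infinite, not_not] at hinf
  -- extract a sequence with injective values
  let e := hinf.natEmbedding
  have hv : ∀ n : ℕ, ∃ i : ι, x i = (e n : X) := fun n => (e n).2
  choose g hg using hv
  have hginj : Function.Injective g := by
    intro n m hnm
    apply e.injective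
    apply Subtype.val_injective
    rw [← hg n, ← hg m, hnm]
  set v : ℕ → X := fun n => x (g n) with hvdef
  have hvinj : Function.Injective v := by
    intro n m hnm
    apply e.injective
    apply Subtype.val_injective
    rw [← hg n, ← hg m]
    exact hnm
  set W : ℕ → Set X := fun n => U (g n) with hWdef
  have hWlf : LocallyFinite W := hlf.comp_injective hginj
  have hWopen : ∀ n, IsOpen (W n) := fun n => hUopen (g n)
  have hvW : ∀ n, v n ∈ W n := fun n => hxU (g n)
  have hvNI : ∀ n, v n ∈ NI X := fun n => hxNI (g n)
  -- P = range v is closed, nonempty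
  have hPcl : IsClosed (Set.range v) := by
    rw [← Set.image_univ]
    exact closed_of_locallyFinite_mem hWlf hvW univ
  obtain ⟨G, hGprop, hGbase⟩ := hd (Set.range v) hPcl ⟨v 0, ⟨0, rfl⟩⟩
  -- pick diagonal points q n
  have hO : ∀ n : ℕ, ∃ q : X, q ∈ G n ∧ q ∈ W n ∧ q ∉ Set.range v := by
    intro n
    have hclim : IsClosed (v '' {m | m ≠ n}) :=
      closed_of_locallyFinite_mem hWlf hvW _
    set O : Set X := G n ∩ W n ∩ (v '' {m | m ≠ n})ᶜ with hOdef
    have hOopen : IsOpen O := (((hGprop n).1.inter (hWopen n)).inter hclim.isOpen_compl)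
    have hvO : v n ∈ O := by
      refine ⟨⟨(hGprop n).2 ⟨n, rfl⟩, hvW n⟩, ?_⟩
      rintro ⟨m, hm, hvm⟩
      exact hm (hvinj hvm)
    have hne : O ≠ {v n} := by
      intro h
      exact hvNI n (h ▸ hOopen)
    have : ∃ q ∈ O, q ≠ v n := by
      by_contra hq
      push_neg at hq
      apply hne
      apply Set.eq_singleton_iff_unique_mem.mpr ⟨hvO, hq⟩
    obtain ⟨q, hqO, hqne⟩ := this
    refine ⟨q, hqO.1.1, hqO.1.2, ?_⟩
    rintro ⟨m, rfl⟩
    by_cases hmn : m = n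
    · exact hqne (by rw [hmn])
    · exact hqO.2 ⟨m, hmn, rfl⟩
  choose q hqG hqW hqP using hO
  have hQcl : IsClosed (Set.range q) := by
    rw [← Set.image_univ]
    exact closed_of_locallyFinite_mem hWlf hqW univ
  have hPU : Set.range v ⊆ (Set.range q)ᶜ := by
    rintro w ⟨n, rfl⟩ ⟨m, hm⟩
    exact hqP m (hm ▸ ⟨n, rfl⟩)
  obtain ⟨n, hn⟩ := hGbase (Set.range q)ᶜ hQcl.isOpen_compl hPU
  exact (hn (hqG n)) ⟨n, rfl⟩

/-- A locally finite open family whose members all meet `s ⊆ NI X` has a finite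
transversal inside `s` (in a T2 `D₁`-space). -/
lemma exists_finite_transversal [T2Space X] (hd : D1Space X) {s : Set X} (hsNI : s ⊆ NI X)
    (𝒰 : Set (Set X)) (hopen : ∀ U ∈ 𝒰, IsOpen U)
    (hlf : LocallyFinite (fun U : 𝒰 => (U : Set X)))
    (hmeet : ∀ U ∈ 𝒰, (s ∩ U).Nonempty) :
    ∃ T : Set X, T.Finite ∧ T ⊆ s ∧ ∀ U ∈ 𝒰, (T ∩ U).Nonempty := by
  have hsel : ∀ U : 𝒰, ∃ p : X, p ∈ s ∧ p ∈ (U : Set X) := fun U => hmeet U U.2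
  choose y hys hyU using hsel
  have hfin : (Set.range y).Finite :=
    finite_range_of_selection hd (fun U : 𝒰 => hopen U U.2) hlf hyU (fun U => hsNI (hys U))
  refine ⟨Set.range y, hfin, Set.range_subset_iff.mpr hys, ?_⟩
  intro U hU
  exact ⟨y ⟨U, hU⟩, ⟨⟨U, hU⟩, rfl⟩, hyU ⟨U, hU⟩⟩


/-- Build subtype-indexed local finiteness from a pointwise finiteness condition. -/
lemma locallyFinite_subtype_of {𝒞 : Set (Set X)}
    (h : ∀ z : X, ∃ N ∈ nhds z, {V ∈ 𝒞 | (V ∩ N).Nonempty}.Finite) :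
    LocallyFinite (fun V : 𝒞 => (V : Set X)) := by
  intro z
  obtain ⟨N, hN, hfin⟩ := h z
  refine ⟨N, hN, ?_⟩
  have hsub : {V : 𝒞 | ((V : Set X) ∩ N).Nonempty} ⊆
      Subtype.val ⁻¹' {V ∈ 𝒞 | (V ∩ N).Nonempty} := fun V hV => ⟨V.2, hV⟩
  exact (hfin.preimage (Set.injOn_of_injective Subtype.val_injective)).subset hsub

/-- Point-finiteness for locally finite families of sets. -/
lemma pointFinite_of_locallyFinite {𝒞 : Set (Set X)}
    (h : LocallyFinite (fun V : 𝒞 => (V : Set X))) (p : X) :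
    {V ∈ 𝒞 | p ∈ V}.Finite := by
  have h1 : {V : 𝒞 | p ∈ (V : Set X)}.Finite := h.point_finite p
  have h2 : {V ∈ 𝒞 | p ∈ V} ⊆ Subtype.val '' {V : 𝒞 | p ∈ (V : Set X)} := by
    rintro V ⟨hV, hpV⟩
    exact ⟨⟨V, hV⟩, hpV, rfl⟩
  exact (h1.image _).subset h2

/-- An antitone countable outer base for a nonempty closed set in a `D₁`-space. -/
lemma exists_antitone_outer (hd : D1Space X) {A : Set X} (hA : IsClosed A)
    (hne : A.Nonempty) :
    ∃ B : ℕ → Set X, (∀ n, IsOpen (B n) ∧ A ⊆ B n) ∧ (∀ m n, m ≤ n → B n ⊆ B m) ∧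
      ∀ U : Set X, IsOpen U → A ⊆ U → ∃ n, B n ⊆ U := by
  obtain ⟨B, h1, h2⟩ := hd A hA hne
  refine ⟨fun n => ⋂ j ∈ Finset.range (n + 1), B j, ?_, ?_, ?_⟩
  · intro n
    constructor
    · exact isOpen_biInter_finset (fun j _ => (h1 j).1)
    · exact Set.subset_iInter₂ (fun j _ => (h1 j).2)
  · intro m n hmn
    apply Set.iInter₂_mono'
    intro j hj
    exact ⟨j, Finset.mem_range.mpr (lt_of_lt_of_le (Finset.mem_range.mp hj) (by omega)), le_refl _⟩
  · intro U hU hAU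
    obtain ⟨n, hn⟩ := h2 U hU hAU
    refine ⟨n, ?_⟩
    refine subset_trans ?_ hn
    exact Set.iInter₂_subset n (Finset.mem_range.mpr (by omega))

/-- First countability of the hyperspace implies that `X` is a `D₁` space. -/
theorem fwd_d1 [T2Space X] [FirstCountableTopology (CL X)] : D1Space X := by
  intro A hA hAne
  set pt : CL X := ⟨A, hAne, hA⟩ with hpt
  obtain ⟨s, hs⟩ := (nhds pt).exists_antitone_basis
  have basis := isTopologicalBasis_of_subbasis (lf_eq (X := X))
  have key : ∀ n : ℕ, ∃ f : Set (Set (CL X)), f.Finite ∧ f ⊆ lfSub X ∧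
      pt ∈ ⋂₀ f ∧ ⋂₀ f ⊆ s n := by
    intro n
    have hmem : s n ∈ nhds pt := hs.toHasBasis.mem_of_mem trivial
    rcases mem_nhds_iff.mp hmem with ⟨O, hOs, hOopen, hptO⟩
    rcases basis.exists_subset_of_mem_open hptO hOopen with ⟨b, hbmem, hptb, hbO⟩
    rcases hbmem with ⟨f, ⟨hffin, hfsub⟩, rfl⟩
    exact ⟨f, hffin, hfsub, hptb, hbO.trans hOs⟩
  choose f hfin hsub hptf hfs using key
  classical
  let w : Set (CL X) → Set X := fun S =>
    if h : ∃ U : Set X, IsOpen U ∧ S = plusSet U then h.choose else univ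
  have hwopen : ∀ S, IsOpen (w S) := by
    intro S
    by_cases h : ∃ U : Set X, IsOpen U ∧ S = plusSet U
    · simp only [w, dif_pos h]; exact h.choose_spec.1
    · simp only [w, dif_neg h]; exact isOpen_univ
  let B : ℕ → Set X := fun n => ⋂ S ∈ f n, w S
  have hBopen : ∀ n, IsOpen (B n) := fun n =>
    (hfin n).isOpen_biInter (fun S _ => hwopen S)
  have hAB : ∀ n, A ⊆ B n := by
    intro n
    apply subset_iInter₂
    intro S hS
    by_cases h : ∃ U : Set X, IsOpen U ∧ S = plusSet U
    · simp only [w, dif_pos h]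
      have hptS : pt ∈ S := hptf n S hS
      rw [h.choose_spec.2] at hptS
      exact hptS
    · simp only [w, dif_neg h]; exact subset_univ A
  refine ⟨B, fun n => ⟨hBopen n, hAB n⟩, ?_⟩
  intro U hU hAU
  have hUnhds : plusSet U ∈ nhds pt := (isOpen_plusSet hU).mem_nhds hAU
  obtain ⟨n, -, hn⟩ := hs.toHasBasis.mem_iff.mp hUnhds
  refine ⟨n, ?_⟩
  intro x hx
  have hxcl : IsClosed (insert x A) := by
    rw [insert_eq]
    exact isClosed_singleton.union hA
  set Ax : CL X := ⟨insert x A, insert_nonempty x A, hxcl⟩ with hAx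
  have hAxf : Ax ∈ ⋂₀ f n := by
    intro S hS
    have hptS : pt ∈ S := hptf n S hS
    by_cases h : ∃ U' : Set X, IsOpen U' ∧ S = plusSet U'
    · have hxw : x ∈ w S := mem_iInter₂.mp hx S hS
      simp only [w, dif_pos h] at hxw
      rw [h.choose_spec.2] at hptS ⊢
      exact insert_subset hxw hptS
    · rcases hsub n hS with hl | hr
      · exact absurd hl h
      · rcases hr with ⟨𝒰, -, -, rfl⟩
        intro V hV
        exact (hptS V hV).mono (inter_subset_inter_left V (subset_insert x A))
  have hAxU : Ax ∈ plusSet U := hn (hfs n hAxf)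
  exact hAxU (mem_insert x A)

/-- First countability of the hyperspace implies `NI X` is hereditarily separable. -/
theorem fwd_hs [T2Space X] [FirstCountableTopology (CL X)] :
    HereditarilySeparable (NI X) := by
  classical
  have hd : D1Space X := fwd_d1
  intro s hsNI
  rcases Set.eq_empty_or_nonempty s with rfl | ⟨x₀, hx₀⟩
  · exact ⟨∅, Set.empty_subset _, countable_empty, by simp⟩
  set A : Set X := closure s with hAdef
  have hsA : s ⊆ A := subset_closure
  set pt : CL X := ⟨A, ⟨x₀, hsA hx₀⟩, isClosed_closure⟩ with hpt
  obtain ⟨t, ht⟩ := (nhds pt).exists_antitone_basis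
  have basis := isTopologicalBasis_of_subbasis (lf_eq (X := X))
  have key : ∀ n : ℕ, ∃ f : Set (Set (CL X)), f.Finite ∧ f ⊆ lfSub X ∧
      pt ∈ ⋂₀ f ∧ ⋂₀ f ⊆ t n := by
    intro n
    have hmem : t n ∈ nhds pt := ht.toHasBasis.mem_of_mem trivial
    rcases mem_nhds_iff.mp hmem with ⟨O, hOs, hOopen, hptO⟩
    rcases basis.exists_subset_of_mem_open hptO hOopen with ⟨b, hbmem, hptb, hbO⟩
    rcases hbmem with ⟨f, ⟨hffin, hfsub⟩, rfl⟩
    exact ⟨f, hffin, hfsub, hptb, hbO.trans hOs⟩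
  choose f hfin hsub hptf hfs using key
  -- per basic set, a finite "forcing" subset of s
  have force : ∀ n : ℕ, ∀ S ∈ f n, ∃ T : Set X, T.Finite ∧ T ⊆ s ∧
      ∀ C : CL X, T ⊆ C.carrier → C.carrier ⊆ A → C ∈ S := by
    intro n S hS
    have hptS : pt ∈ S := hptf n S hS
    rcases hsub n hS with ⟨U, hUo, rfl⟩ | ⟨𝒰, h1, h2, rfl⟩
    · refine ⟨∅, finite_empty, Set.empty_subset _, ?_⟩
      intro C _ hCA
      exact hCA.trans hptS
    · have hmeet : ∀ U ∈ 𝒰, (s ∩ U).Nonempty := by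
        intro U hU
        obtain ⟨a, haA, haU⟩ := hptS U hU
        obtain ⟨p, hp1, hp2⟩ := mem_closure_iff.mp haA U (h1 U hU) haU
        exact ⟨p, hp2, hp1⟩
      obtain ⟨T, hTfin, hTs, hTtr⟩ := exists_finite_transversal hd hsNI 𝒰 h1 h2 hmeet
      refine ⟨T, hTfin, hTs, ?_⟩
      intro C hTC _ U hU
      exact (hTtr U hU).mono (inter_subset_inter_left U hTC)
  choose T hTfin hTs hTforce using force
  set cn : ℕ → Set X := fun n => insert x₀ (⋃ S : (f n : Set (Set (CL X))), T n S S.2)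
    with hcn
  have hcnfin : ∀ n, (cn n).Finite := by
    intro n
    refine Set.Finite.insert x₀ ?_
    haveI : Finite ((f n : Set (Set (CL X)))) := (hfin n).to_subtype
    exact Set.finite_iUnion (fun S => hTfin n S S.2)
  have hcns : ∀ n, cn n ⊆ s := by
    intro n
    refine Set.insert_subset hx₀ ?_
    exact Set.iUnion_subset (fun S => hTs n S S.2)
  set c : Set X := ⋃ n, cn n with hc
  have hcs : c ⊆ s := Set.iUnion_subset hcns
  refine ⟨c, hcs, Set.countable_iUnion (fun n => (hcnfin n).countable), ?_⟩
  -- density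
  intro x hx
  rw [mem_closure_iff]
  intro W hWo hxW
  -- the minus set of {W} is a neighborhood of pt
  haveI : Finite (({W} : Set (Set X))) := (Set.finite_singleton W).to_subtype
  have hWlf : LocallyFinite (fun U : ({W} : Set (Set X)) => (U : Set X)) :=
    locallyFinite_of_finite _
  have hWopen' : ∀ U ∈ ({W} : Set (Set X)), IsOpen U := by
    intro U hU; rw [Set.mem_singleton_iff] at hU; rw [hU]; exact hWo
  have hWnhds : minusSet {W} ∈ nhds pt := by
    apply (isOpen_minusSet hWopen' hWlf).mem_nhds
    intro U hU
    rw [Set.mem_singleton_iff] at hU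
    subst hU
    exact ⟨x, hsA hx, hxW⟩
  obtain ⟨n, -, hn⟩ := ht.toHasBasis.mem_iff.mp hWnhds
  -- Cn = closure of cn n
  have hcnA : closure (cn n) ⊆ A := by
    rw [hAdef]
    exact closure_mono (hcns n)
  set Cn : CL X := ⟨closure (cn n), ⟨x₀, subset_closure (Set.mem_insert _ _)⟩,
    isClosed_closure⟩ with hCn
  have hCnf : Cn ∈ ⋂₀ f n := by
    intro S hS
    apply hTforce n S hS
    · refine subset_trans ?_ subset_closure
      intro p hp
      exact Set.mem_insert_iff.mpr (Or.inr (Set.mem_iUnion.mpr ⟨⟨S, hS⟩, hp⟩))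
    · exact hcnA
  have hCnW : Cn ∈ minusSet {W} := hn (hfs n hCnf)
  obtain ⟨a, haC, haW⟩ := hCnW W rfl
  obtain ⟨p, hpW, hpcn⟩ := mem_closure_iff.mp haC W hWo haW
  exact ⟨p, hpW, Set.mem_iUnion.mpr ⟨n, hpcn⟩⟩

/-- `D₁` together with hereditary separability of the non-isolated points implies
first countability of the hyperspace. -/
theorem bwd [T2Space X] (hd : D1Space X) (hh : HereditarilySeparable (NI X)) :
    FirstCountableTopology (CL X) := by
  classical
  constructor
  intro pt
  set A : Set X := pt.carrier with hAdef
  have hAcl : IsClosed A := pt.isClosed'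
  have hAne : A.Nonempty := pt.nonempty'
  obtain ⟨x₀, hx₀⟩ := hAne
  -- outer base of A
  obtain ⟨G, hG1, hG2, hG3⟩ := exists_antitone_outer hd hAcl ⟨x₀, hx₀⟩
  -- dense countable subset of A ∩ NI X
  obtain ⟨c, hcs, hccount, hcdense⟩ := hh (A ∩ NI X) (Set.inter_subset_right)
  -- enumeration D of c (or junk)
  have hDex : ∃ D : ℕ → X, Set.range D ⊆ A ∧ c ⊆ Set.range D := by
    rcases Set.eq_empty_or_nonempty c with rfl | hcne
    · exact ⟨fun _ => x₀, by rintro y ⟨n, rfl⟩; exact hx₀, Set.empty_subset _⟩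
    · obtain ⟨D, hD⟩ := (Set.Countable.exists_eq_range hccount hcne)
      refine ⟨D, ?_, le_of_eq hD⟩
      rintro y ⟨n, rfl⟩
      have : D n ∈ c := hD ▸ ⟨n, rfl⟩
      exact (hcs this).1
  obtain ⟨D, hDA, hcD⟩ := hDex
  -- neighborhood bases at points
  have hballex : ∀ x : X, ∃ B : ℕ → Set X, (∀ i, IsOpen (B i) ∧ x ∈ B i) ∧
      ∀ U : Set X, IsOpen U → x ∈ U → ∃ i, B i ⊆ U := by
    intro x
    obtain ⟨B, h1, h2⟩ := hd {x} isClosed_singleton ⟨x, rfl⟩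
    exact ⟨B, fun i => ⟨(h1 i).1, (h1 i).2 rfl⟩,
      fun U hU hxU => h2 U hU (Set.singleton_subset_iff.mpr hxU)⟩
  choose ball hball1 hball2 using hballex
  -- isolated part of A
  set I : Set X := A \ NI X with hIdef
  have hIiso : ∀ a ∈ I, IsOpen ({a} : Set X) := by
    intro a ha
    have := ha.2
    simp only [NI, Set.mem_setOf_eq] at this
    exact not_not.mp this
  have hIopen : IsOpen I := by
    rw [isOpen_iff_mem_nhds]
    intro a ha
    exact Filter.mem_of_superset ((hIiso a ha).mem_nhds rfl)
      (Set.singleton_subset_iff.mpr ha)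
  have hIA : I ⊆ A := Set.diff_subset
  set R : Set X := closure I \ I with hRdef
  have hRcl : IsClosed R := IsClosed.sdiff isClosed_closure hIopen
  have hRI : R ∩ I = ∅ := by
    ext z; simp only [Set.mem_inter_iff, Set.mem_empty_iff_false, iff_false]
    rintro ⟨⟨-, h2⟩, h3⟩; exact h2 h3
  -- outer base of R (or junk if R empty)
  have hHex : ∃ H : ℕ → Set X, (∀ u, IsOpen (H u) ∧ R ⊆ H u) ∧
      (∀ u v, u ≤ v → H v ⊆ H u) ∧ ∀ U : Set X, IsOpen U → R ⊆ U → ∃ u, H u ⊆ U := by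
    rcases Set.eq_empty_or_nonempty R with hRe | hRne
    · exact ⟨fun _ => ∅, fun _ => ⟨isOpen_empty, hRe ▸ subset_rfl⟩,
        fun _ _ _ => subset_rfl, fun U _ _ => ⟨0, Set.empty_subset U⟩⟩
    · obtain ⟨H, h1, h2, h3⟩ := exists_antitone_outer hd hRcl hRne
      exact ⟨H, h1, h2, h3⟩
  obtain ⟨H, hH1, hH2, hH3⟩ := hHex
  set Q : ℕ → Set X := fun u => I \ H u with hQdef
  -- the countable family of candidate neighborhoods
  set fam : ℕ → Finset (ℕ × ℕ) → Set (Set X) := fun u F =>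
    {V | ∃ a ∈ Q u, V = {a}} ∪ {V | ∃ p ∈ F, V = ball (D p.1) p.2} with hfam
  have hfam_open : ∀ u F, ∀ V ∈ fam u F, IsOpen V := by
    rintro u F V (⟨a, ha, rfl⟩ | ⟨p, hp, rfl⟩)
    · exact hIiso a ha.1
    · exact (hball1 (D p.1) p.2).1
  have hfam_meet : ∀ u F, ∀ V ∈ fam u F, (A ∩ V).Nonempty := by
    rintro u F V (⟨a, ha, rfl⟩ | ⟨p, hp, rfl⟩)
    · exact ⟨a, hIA ha.1, rfl⟩
    · exact ⟨D p.1, hDA ⟨p.1, rfl⟩, (hball1 (D p.1) p.2).2⟩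
  have hfam_lf : ∀ u F, LocallyFinite (fun V : fam u F => (V : Set X)) := by
    intro u F
    apply locallyFinite_subtype_of
    intro z
    have hballfin : {V | ∃ p ∈ F, V = ball (D p.1) p.2}.Finite := by
      have : {V | ∃ p ∈ F, V = ball (D p.1) p.2} ⊆
          (fun p : ℕ × ℕ => ball (D p.1) p.2) '' (F : Set (ℕ × ℕ)) := by
        rintro V ⟨p, hp, rfl⟩; exact ⟨p, hp, rfl⟩
      exact ((F.finite_toSet).image _).subset this
    by_cases hzI : z ∈ I
    · refine ⟨{z}, (hIiso z hzI).mem_nhds rfl, ?_⟩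
      have : {V ∈ fam u F | (V ∩ {z}).Nonempty} ⊆
          insert ({z} : Set X) {V | ∃ p ∈ F, V = ball (D p.1) p.2} := by
        rintro V ⟨(⟨a, ha, rfl⟩ | hb), hne⟩
        · left
          obtain ⟨w, hw1, hw2⟩ := hne
          simp only [Set.mem_singleton_iff] at hw1 hw2
          rw [hw2] at hw1; rw [hw1]
        · right; exact hb
      exact (hballfin.insert _).subset this
    · by_cases hzcl : z ∈ closure I
      · have hzR : z ∈ R := ⟨hzcl, hzI⟩
        refine ⟨H u, ((hH1 u).1).mem_nhds ((hH1 u).2 hzR), ?_⟩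
        have : {V ∈ fam u F | (V ∩ H u).Nonempty} ⊆
            {V | ∃ p ∈ F, V = ball (D p.1) p.2} := by
          rintro V ⟨(⟨a, ha, rfl⟩ | hb), hne⟩
          · exfalso
            obtain ⟨w, hw1, hw2⟩ := hne
            simp only [Set.mem_singleton_iff] at hw1
            rw [hw1] at hw2
            exact ha.2 hw2
          · exact hb
        exact hballfin.subset this
      · refine ⟨(closure I)ᶜ, (isClosed_closure.isOpen_compl).mem_nhds hzcl, ?_⟩
        have : {V ∈ fam u F | (V ∩ (closure I)ᶜ).Nonempty} ⊆
            {V | ∃ p ∈ F, V = ball (D p.1) p.2} := by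
          rintro V ⟨(⟨a, ha, rfl⟩ | hb), hne⟩
          · exfalso
            obtain ⟨w, hw1, hw2⟩ := hne
            simp only [Set.mem_singleton_iff] at hw1
            rw [hw1] at hw2
            exact hw2 (subset_closure ha.1)
          · exact hb
        exact hballfin.subset this
  -- the candidate neighborhoods
  set Nb : ℕ → ℕ → Finset (ℕ × ℕ) → Set (CL X) := fun k u F =>
    plusSet (G k) ∩ minusSet (fam u F) with hNb
  have hNbopen : ∀ k u F, IsOpen (Nb k u F) := fun k u F =>
    (isOpen_plusSet (hG1 k).1).inter (isOpen_minusSet (hfam_open u F) (hfam_lf u F))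
  have hNbpt : ∀ k u F, pt ∈ Nb k u F := by
    intro k u F
    constructor
    · exact (hG1 k).2
    · intro V hV
      exact hfam_meet u F V hV
  have hNbmono : ∀ k k' u u' (F F' : Finset (ℕ × ℕ)), k ≤ k' → u ≤ u' → F ⊆ F' →
      Nb k' u' F' ⊆ Nb k u F := by
    intro k k' u u' F F' hk hu hF C hC
    constructor
    · exact subset_trans hC.1 (hG2 k k' hk)
    · intro V hV
      apply hC.2
      rcases hV with ⟨a, ha, rfl⟩ | ⟨p, hp, rfl⟩
      · exact Or.inl ⟨a, ⟨ha.1, fun haH => ha.2 (hH2 u u' hu haH)⟩, rfl⟩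
      · exact Or.inr ⟨p, hF hp, rfl⟩
  -- main claim: each subbasic neighborhood of pt absorbs some Nb
  have hsubbasic : ∀ S ∈ lfSub X, pt ∈ S → ∃ k : ℕ, ∃ u : ℕ, ∃ F : Finset (ℕ × ℕ), Nb k u F ⊆ S := by
    rintro S (⟨U, hUo, rfl⟩ | ⟨𝒱, h𝒱o, h𝒱lf, rfl⟩) hptS
    · -- plus case
      obtain ⟨k, hk⟩ := hG3 U hUo hptS
      exact ⟨k, 0, ∅, fun C hC => subset_trans hC.1 hk⟩
    · -- minus case
      have hmeet : ∀ V ∈ 𝒱, (A ∩ V).Nonempty := hptS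
      -- 𝒱₁ : members meeting A ∩ NI X
      set 𝒱₁ : Set (Set X) := {V ∈ 𝒱 | (V ∩ (A ∩ NI X)).Nonempty} with h𝒱₁
      have h𝒱₁fin : 𝒱₁.Finite := by
        have hysel : ∀ V : 𝒱₁, ∃ y : X, y ∈ (V : Set X) ∧ y ∈ A ∩ NI X := by
          rintro ⟨V, hV, y, hy1, hy2⟩
          exact ⟨y, hy1, hy2⟩
        choose y hy1 hy2 using hysel
        have hincl : Function.Injective (fun V : 𝒱₁ => (⟨V.1, V.2.1⟩ : 𝒱)) := by
          intro V W hVW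
          apply Subtype.val_injective
          have h2 := congrArg (Subtype.val : 𝒱 → Set X) hVW
          simpa using h2
        have hlf' : LocallyFinite (fun V : 𝒱₁ => (V : Set X)) :=
          h𝒱lf.comp_injective hincl
        have hYfin : (Set.range y).Finite :=
          finite_range_of_selection hd (fun V : 𝒱₁ => h𝒱o V V.2.1) hlf' hy1
            (fun V => (hy2 V).2)
        have hcover : 𝒱₁ ⊆ ⋃ p ∈ Set.range y, {V ∈ 𝒱 | p ∈ V} := by
          intro V hV
          apply Set.mem_biUnion (Set.mem_range_self (⟨V, hV⟩ : 𝒱₁))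
          exact ⟨hV.1, hy1 ⟨V, hV⟩⟩
        exact (hYfin.biUnion (fun p _ => pointFinite_of_locallyFinite h𝒱lf p)).subset hcover
      -- for V ∈ 𝒱₁ find a ball inside V centered in c
      have hball𝒱₁ : ∀ V ∈ 𝒱₁, ∃ p : ℕ × ℕ, ball (D p.1) p.2 ⊆ V := by
        intro V hV
        obtain ⟨y, hyV, hyA⟩ := hV.2
        have hyc : y ∈ closure c := hcdense hyA
        obtain ⟨d, hdV, hdc⟩ := mem_closure_iff.mp hyc V (h𝒱o V hV.1) hyV
        obtain ⟨j, hj⟩ := hcD hdc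
        obtain ⟨i, hi⟩ := hball2 (D j) V (h𝒱o V hV.1) (hj ▸ hdV)
        exact ⟨(j, i), hi⟩
      choose pb hpb using hball𝒱₁
      -- build the finite F
      have hFim : ((fun Vh : 𝒱₁ => pb Vh.1 Vh.2) '' Set.univ).Finite := by
        haveI : Finite 𝒱₁ := h𝒱₁fin.to_subtype
        exact Set.toFinite _
      set F : Finset (ℕ × ℕ) := hFim.toFinset with hF
      have hFmem : ∀ V (hV : V ∈ 𝒱₁), pb V hV ∈ F := by
        intro V hV
        rw [hF, Set.Finite.mem_toFinset]
        exact ⟨⟨V, hV⟩, Set.mem_univ _, rfl⟩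
      -- find u handling 𝒱 \ 𝒱₁
      have hu : ∃ u, ∀ V ∈ 𝒱, V ∉ 𝒱₁ → (Q u ∩ V).Nonempty := by
        by_contra hcon
        have hcon' : ∀ u : ℕ, ∃ V, V ∈ 𝒱 ∧ V ∉ 𝒱₁ ∧ Q u ∩ V = ∅ := by
          intro u
          by_contra h2
          apply hcon
          refine ⟨u, ?_⟩
          intro V hV hV1
          rw [Set.nonempty_iff_ne_empty]
          intro he
          exact h2 ⟨V, hV, hV1, he⟩
        choose Vf hVf1 hVf2 hVf3 using hcon'
        -- Vf u ∩ A ⊆ I and misses Q u, hence Vf u ∩ A ⊆ H u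
        have hVA : ∀ u, (Vf u ∩ A).Nonempty := by
          intro u
          obtain ⟨a, ha1, ha2⟩ := hmeet (Vf u) (hVf1 u)
          exact ⟨a, ha2, ha1⟩
        have hVAI : ∀ u, Vf u ∩ A ⊆ I := by
          intro u z hz
          by_contra hzI
          apply hVf2 u
          refine ⟨hVf1 u, ⟨z, hz.1, hz.2, ?_⟩⟩
          by_contra hzNI
          exact hzI ⟨hz.2, hzNI⟩
        have hVAH : ∀ u, Vf u ∩ A ⊆ H u := by
          intro u z hz
          have hzI : z ∈ I := hVAI u hz
          by_contra hzH
          have hQz : z ∈ Q u := ⟨hzI, hzH⟩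
          have hmem : z ∈ Q u ∩ Vf u := ⟨hQz, hz.1⟩
          rw [hVf3 u] at hmem
          exact hmem
        by_cases hfin : (Set.range Vf).Finite
        · -- some value repeats cofinally
          have : ∃ V₀ ∈ Set.range Vf, {u | Vf u = V₀}.Infinite := by
            by_contra hcon2
            push_neg at hcon2
            have : (Set.univ : Set ℕ).Finite := by
              have : (Set.univ : Set ℕ) ⊆ ⋃ V₀ ∈ Set.range Vf, {u | Vf u = V₀} := by
                intro u _
                exact Set.mem_biUnion (Set.mem_range_self u) rfl
              refine Set.Finite.subset ?_ this
              apply hfin.biUnion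
              intro V₀ hV₀
              rw [← Set.not_infinite]
              exact Set.not_infinite.mpr (hcon2 V₀ hV₀)
            exact Set.infinite_univ this
          obtain ⟨V₀, hV₀r, hV₀inf⟩ := this
          obtain ⟨u₀, hu₀⟩ := hV₀r
          obtain ⟨a, ha⟩ := hVA u₀
          have haH : ∀ u, a ∈ H u := by
            intro u
            obtain ⟨u', hu'1, hu'2⟩ := hV₀inf.exists_gt u
            have : Vf u' ∩ A ⊆ H u' := hVAH u'
            have haV : a ∈ Vf u' ∩ A := by
              rw [hu'1, ← hu₀]; exact ha
            exact hH2 u u' (le_of_lt hu'2) (this haV)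
          have haI : a ∈ I := hVAI u₀ ha
          have haR : a ∉ R := by
            intro haR
            have := hRI
            have : a ∈ R ∩ I := ⟨haR, haI⟩
            rw [hRI] at this
            exact this
          obtain ⟨u, hu⟩ := hH3 ({a}ᶜ) (isClosed_singleton.isOpen_compl)
            (by intro z hz; simp only [Set.mem_compl_iff, Set.mem_singleton_iff]
                rintro rfl; exact haR hz)
          exact (hu (haH u)) rfl
        · -- infinitely many distinct members: build a closed discrete set
          rw [← Set.not_infinite, not_not] at hfin
          let e := hfin.natEmbedding
          have hsel : ∀ m : ℕ, ∃ u : ℕ, Vf u = (e m : Set X) := fun m => (e m).2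
          choose g hg using hsel
          have hVginj : Function.Injective (fun m => Vf (g m)) := by
            intro m m' hmm
            apply e.injective
            apply Subtype.val_injective
            rw [← hg m, ← hg m']
            exact hmm
          have hginj : Function.Injective g := by
            intro m m' h
            apply hVginj
            show Vf (g m) = Vf (g m')
            rw [h]
          -- select points
          have hwsel : ∀ m : ℕ, ∃ w : X, w ∈ Vf (g m) ∩ A := fun m => hVA (g m)
          choose w hw using hwsel
          have hsubinj : Function.Injective (fun m => (⟨Vf (g m), hVf1 (g m)⟩ : 𝒱)) := by
            intro m m' h
            exact hVginj (congrArg Subtype.val h)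
          have hwlf : LocallyFinite (fun m : ℕ => Vf (g m)) :=
            h𝒱lf.comp_injective hsubinj
          have hwS : IsClosed (w '' Set.univ) :=
            closed_of_locallyFinite_mem hwlf (fun m => (hw m).1) Set.univ
          have hSR : R ⊆ (w '' Set.univ)ᶜ := by
            intro z hz
            rintro ⟨m, -, rfl⟩
            have : w m ∈ I := hVAI (g m) (hw m)
            have : w m ∈ R ∩ I := ⟨hz, this⟩
            rw [hRI] at this
            exact this
          obtain ⟨ustar, hustar⟩ := hH3 _ hwS.isOpen_compl hSR
          -- find m with g m ≥ ustar
          have : ∃ m, ustar ≤ g m := by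
            by_contra hcon3
            push_neg at hcon3
            have : (Set.range g).Finite :=
              (Set.finite_Iio ustar).subset (by rintro x ⟨m, rfl⟩; exact hcon3 m)
            exact (Set.infinite_range_of_injective hginj) this
          obtain ⟨m, hm⟩ := this
          have hwH : w m ∈ H ustar := hH2 ustar (g m) hm (hVAH (g m) (hw m))
          exact (hustar hwH) ⟨m, Set.mem_univ m, rfl⟩
      obtain ⟨u, huQ⟩ := hu
      refine ⟨0, u, F, ?_⟩
      intro C hC V hV
      by_cases hV1 : V ∈ 𝒱₁
      · have hp := hpb V hV1
        have hmem : ball (D (pb V hV1).1) (pb V hV1).2 ∈ fam u F :=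
          Or.inr ⟨pb V hV1, hFmem V hV1, rfl⟩
        exact (hC.2 _ hmem).mono (Set.inter_subset_inter_right _ hp)
      · obtain ⟨a, haQ, haV⟩ := huQ V hV hV1
        have hmem : ({a} : Set X) ∈ fam u F := Or.inl ⟨a, haQ, rfl⟩
        obtain ⟨b, hb1, hb2⟩ := hC.2 _ hmem
        simp only [Set.mem_singleton_iff] at hb2
        exact ⟨a, hb2 ▸ hb1, haV⟩
  -- combine over finite intersections of subbasics
  have hcomb : ∀ f : Set (Set (CL X)), f.Finite → f ⊆ lfSub X → pt ∈ ⋂₀ f →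
      ∃ k : ℕ, ∃ u : ℕ, ∃ F : Finset (ℕ × ℕ), Nb k u F ⊆ ⋂₀ f := by
    intro f hf
    refine Set.Finite.induction_on
      (motive := fun f _ => f ⊆ lfSub X → pt ∈ ⋂₀ f →
        ∃ k : ℕ, ∃ u : ℕ, ∃ F : Finset (ℕ × ℕ), Nb k u F ⊆ ⋂₀ f) f hf ?_ ?_
    · intro _ _; exact ⟨0, 0, ∅, by simp⟩
    · rintro S f hSf hffin IH hsub hpt
      rw [Set.sInter_insert]
      have hptS : pt ∈ S := (Set.mem_sInter.mp hpt) S (Set.mem_insert S f)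
      have hptf : pt ∈ ⋂₀ f := by
        intro T hT
        exact (Set.mem_sInter.mp hpt) T (Set.mem_insert_of_mem S hT)
      obtain ⟨k₁, u₁, F₁, h1⟩ := hsubbasic S (hsub (Set.mem_insert S f)) hptS
      obtain ⟨k₂, u₂, F₂, h2⟩ := IH (fun T hT => hsub (Set.mem_insert_of_mem S hT)) hptf
      refine ⟨max k₁ k₂, max u₁ u₂, F₁ ∪ F₂, ?_⟩
      intro C hC
      constructor
      · exact h1 (hNbmono k₁ (max k₁ k₂) u₁ (max u₁ u₂) F₁ (F₁ ∪ F₂)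
          (le_max_left _ _) (le_max_left _ _) Finset.subset_union_left hC)
      · exact h2 (hNbmono k₂ (max k₁ k₂) u₂ (max u₁ u₂) F₂ (F₁ ∪ F₂)
          (le_max_right _ _) (le_max_right _ _) Finset.subset_union_right hC)
  -- conclude countable generation of the neighborhood filter
  have hbasis : (nhds pt).HasBasis (fun _ : ℕ × ℕ × Finset (ℕ × ℕ) => True)
      (fun q => Nb q.1 q.2.1 q.2.2) := by
    rw [Filter.hasBasis_iff]
    intro V
    constructor
    · intro hV
      rcases mem_nhds_iff.mp hV with ⟨O, hOV, hOopen, hptO⟩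
      have basis := isTopologicalBasis_of_subbasis (lf_eq (X := X))
      rcases basis.exists_subset_of_mem_open hptO hOopen with ⟨b, hbmem, hptb, hbO⟩
      rcases hbmem with ⟨f, ⟨hffin, hfsub⟩, rfl⟩
      obtain ⟨k, u, F, hN⟩ := hcomb f hffin hfsub hptb
      exact ⟨(k, u, F), trivial, hN.trans (hbO.trans hOV)⟩
    · rintro ⟨q, -, hq⟩
      exact Filter.mem_of_superset
        ((hNbopen q.1 q.2.1 q.2.2).mem_nhds (hNbpt q.1 q.2.1 q.2.2)) hq
  exact hbasis.isCountablyGenerated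

end Aux

theorem firstCountable_CL_locFin_iff {X : Type*} [TopologicalSpace X] [T2Space X] :
    FirstCountableTopology (CL X) ↔
      (D1Space X ∧ HereditarilySeparable (NI X)) := by
  constructor
  · intro h
    exact ⟨fwd_d1, fwd_hs⟩
  · rintro ⟨hd, hh⟩
    exact bwd hd hh
end

section
/- If (CL(X), τ_locfin) is first-countable, then the subspace NI(X) of non-isolated points of X is hereditarily separable. -/
open Set TopologicalSpace

open Topology Filter

namespace HSNI

variable {X : Type*} [TopologicalSpace X]

/-- the subbasis -/
def sub (X : Type*) [TopologicalSpace X] : Set (Set (CL X)) :=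
  ({S | ∃ U : Set X, IsOpen U ∧ S = {A : CL X | A.carrier ⊆ U}} ∪
     {S | ∃ 𝒰 : Set (Set X), (∀ U ∈ 𝒰, IsOpen U) ∧
        LocallyFinite (fun U : 𝒰 => (U : Set X)) ∧
        S = {A : CL X | ∀ U ∈ 𝒰, (A.carrier ∩ U).Nonempty}})

lemma topEq : (inferInstance : TopologicalSpace (CL X)) = generateFrom (sub X) := rfl

def goodFam (𝒱 : Set (Set X)) : Prop :=
  (∀ V ∈ 𝒱, IsOpen V) ∧ LocallyFinite (fun U : 𝒱 => (U : Set X))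

def bas (W : Set X) (𝒱 : Set (Set X)) : Set (CL X) :=
  {A : CL X | A.carrier ⊆ W ∧ ∀ V ∈ 𝒱, (A.carrier ∩ V).Nonempty}

lemma lf_iff (𝒜 : Set (Set X)) :
    LocallyFinite (fun U : 𝒜 => (U : Set X)) ↔
      ∀ x : X, ∃ t ∈ 𝓝 x, {U ∈ 𝒜 | (U ∩ t).Nonempty}.Finite := by
  constructor
  · intro h x
    obtain ⟨t, ht, hfin⟩ := h x
    refine ⟨t, ht, ?_⟩
    have : {U ∈ 𝒜 | (U ∩ t).Nonempty} = Subtype.val '' {i : 𝒜 | ((i : Set X) ∩ t).Nonempty} := by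
      ext U
      constructor
      · rintro ⟨hU, hne⟩; exact ⟨⟨U, hU⟩, hne, rfl⟩
      · rintro ⟨⟨V, hV⟩, hne, rfl⟩; exact ⟨hV, hne⟩
    rw [this]
    exact hfin.image _
  · intro h x
    obtain ⟨t, ht, hfin⟩ := h x
    refine ⟨t, ht, ?_⟩
    have : {i : 𝒜 | ((i : Set X) ∩ t).Nonempty} = Subtype.val ⁻¹' {U ∈ 𝒜 | (U ∩ t).Nonempty} := by
      ext ⟨V, hV⟩; simp [hV]
    rw [this]
    exact hfin.preimage Subtype.val_injective.injOn

lemma goodFam_empty : goodFam (∅ : Set (Set X)) := by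
  constructor
  · intro V hV; exact absurd hV (notMem_empty V)
  · rw [lf_iff]
    intro x
    exact ⟨univ, univ_mem, by simp⟩

lemma goodFam_union {𝒰 𝒱 : Set (Set X)} (h1 : goodFam 𝒰) (h2 : goodFam 𝒱) :
    goodFam (𝒰 ∪ 𝒱) := by
  obtain ⟨h1o, h1f⟩ := h1
  obtain ⟨h2o, h2f⟩ := h2
  rw [lf_iff] at h1f h2f
  constructor
  · intro V hV; rcases hV with hV | hV; exacts [h1o V hV, h2o V hV]
  · rw [lf_iff]
    intro x
    obtain ⟨t1, ht1, hf1⟩ := h1f x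
    obtain ⟨t2, ht2, hf2⟩ := h2f x
    refine ⟨t1 ∩ t2, Filter.inter_mem ht1 ht2, ((hf1.union hf2).subset ?_)⟩
    rintro U ⟨hU | hU, hne⟩
    · exact Or.inl ⟨hU, hne.mono (by intro y hy; exact ⟨hy.1, hy.2.1⟩)⟩
    · exact Or.inr ⟨hU, hne.mono (by intro y hy; exact ⟨hy.1, hy.2.2⟩)⟩

/-- build a good family by injecting into a good family -/
lemma goodFam_of_inj {𝒱 𝒜 : Set (Set X)} (h : goodFam 𝒱) (ν : Set X → Set X)
    (hop : ∀ U ∈ 𝒜, IsOpen U) (hsub : ∀ U ∈ 𝒜, U ⊆ ν U)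
    (hmem : ∀ U ∈ 𝒜, ν U ∈ 𝒱) (hinj : InjOn ν 𝒜) : goodFam 𝒜 := by
  refine ⟨hop, ?_⟩
  rw [lf_iff]
  intro x
  obtain ⟨t, ht, hfin⟩ := (lf_iff 𝒱).1 h.2 x
  refine ⟨t, ht, ?_⟩
  refine Set.Finite.of_finite_image (f := ν) (hfin.subset ?_) (hinj.mono (fun U hU => hU.1))
  rintro V ⟨U, ⟨hU, hne⟩, rfl⟩
  exact ⟨hmem U hU, hne.mono (inter_subset_inter_left t (hsub U hU))⟩

lemma goodFam_singleton {O : Set X} (hO : IsOpen O) : goodFam ({O} : Set (Set X)) := by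
  constructor
  · intro V hV; rw [mem_singleton_iff] at hV; subst hV; exact hO
  · rw [lf_iff]
    intro x
    exact ⟨univ, univ_mem, (finite_singleton O).subset (fun U hU => hU.1)⟩

lemma isOpen_bas {W : Set X} {𝒱 : Set (Set X)} (hW : IsOpen W) (h𝒱 : goodFam 𝒱) :
    IsOpen (bas W 𝒱) := by
  have h1 : IsOpen {A : CL X | A.carrier ⊆ W} :=
    isOpen_generateFrom_of_mem (g := sub X) (Or.inl ⟨W, hW, rfl⟩)
  have h2 : IsOpen {A : CL X | ∀ V ∈ 𝒱, (A.carrier ∩ V).Nonempty} :=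
    isOpen_generateFrom_of_mem (g := sub X) (Or.inr ⟨𝒱, h𝒱.1, h𝒱.2, rfl⟩)
  exact h1.inter h2

lemma sInter_normal (f : Set (Set (CL X))) (hfin : f.Finite) (hsub : f ⊆ sub X) :
    ∃ (W : Set X) (𝒱 : Set (Set X)), IsOpen W ∧ goodFam 𝒱 ∧ ⋂₀ f = bas W 𝒱 := by
  refine Set.Finite.induction_on (motive := fun f _ => f ⊆ sub X →
      ∃ (W : Set X) (𝒱 : Set (Set X)), IsOpen W ∧ goodFam 𝒱 ∧ ⋂₀ f = bas W 𝒱) f hfin ?_ ?_ hsub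
  · intro _
    refine ⟨univ, ∅, isOpen_univ, goodFam_empty, ?_⟩
    ext A; simp [bas]
  · rintro S f hS hf ih hsub
    obtain ⟨W, 𝒱, hW, h𝒱, heq⟩ := ih (fun T hT => hsub (mem_insert_of_mem S hT))
    have hSmem : S ∈ sub X := hsub (mem_insert S f)
    rcases hSmem with ⟨U, hU, rfl⟩ | ⟨𝒰, h𝒰o, h𝒰f, rfl⟩
    · refine ⟨U ∩ W, 𝒱, hU.inter hW, h𝒱, ?_⟩
      rw [sInter_insert, heq]
      ext A
      simp only [bas, mem_inter_iff, mem_setOf_eq, subset_inter_iff]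
      tauto
    · refine ⟨W, 𝒰 ∪ 𝒱, hW, goodFam_union ⟨h𝒰o, h𝒰f⟩ h𝒱, ?_⟩
      rw [sInter_insert, heq]
      ext A
      simp only [bas, mem_inter_iff, mem_setOf_eq, mem_union]
      constructor
      · rintro ⟨hhit, hsubW, hhit'⟩
        exact ⟨hsubW, fun V hV => hV.elim (hhit V) (hhit' V)⟩
      · rintro ⟨hsubW, hall⟩
        exact ⟨fun V hV => hall V (Or.inl hV), hsubW, fun V hV => hall V (Or.inr hV)⟩

lemma exists_bas_basis [FirstCountableTopology (CL X)] (F : CL X) :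
    ∃ (W : ℕ → Set X) (𝒱 : ℕ → Set (Set X)),
      (∀ n, IsOpen (W n)) ∧ (∀ n, goodFam (𝒱 n)) ∧ (∀ n, F ∈ bas (W n) (𝒱 n)) ∧
      ∀ N ∈ 𝓝 F, ∃ n, bas (W n) (𝒱 n) ⊆ N := by
  obtain ⟨B, hB⟩ := (𝓝 F).exists_antitone_basis
  have basis := isTopologicalBasis_of_subbasis (topEq (X := X))
  have key : ∀ n : ℕ, ∃ (W : Set X) (𝒱 : Set (Set X)),
      IsOpen W ∧ goodFam 𝒱 ∧ F ∈ bas W 𝒱 ∧ bas W 𝒱 ⊆ B n := by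
    intro n
    have hBn : B n ∈ 𝓝 F := hB.mem n
    obtain ⟨O, hOB, hOopen, hFO⟩ := mem_nhds_iff.1 hBn
    obtain ⟨b, ⟨f, ⟨hffin, hfsub⟩, rfl⟩, hFb, hbO⟩ :=
      basis.exists_subset_of_mem_open hFO hOopen
    obtain ⟨W, 𝒱, hW, h𝒱, heq⟩ := sInter_normal f hffin hfsub
    simp only [show (fun f : Set (Set (CL X)) => ⋂₀ f) f = ⋂₀ f from rfl] at hFb hbO
    rw [heq] at hFb hbO
    exact ⟨W, 𝒱, hW, h𝒱, hFb, hbO.trans hOB⟩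
  choose W 𝒱 hW h𝒱 hF hsub using key
  refine ⟨W, 𝒱, hW, h𝒱, hF, ?_⟩
  intro N hN
  obtain ⟨n, hn⟩ := hB.toHasBasis.mem_iff.1 hN
  exact ⟨n, (hsub n).trans hn.2⟩

end HSNI

namespace HSNI

variable {X : Type*} [TopologicalSpace X]

def lowerN (𝒰 : Set (Set X)) : Set (CL X) :=
  {A : CL X | ∀ U ∈ 𝒰, (A.carrier ∩ U).Nonempty}

lemma isOpen_lowerN {𝒰 : Set (Set X)} (h : goodFam 𝒰) : IsOpen (lowerN 𝒰) :=
  isOpen_generateFrom_of_mem (g := sub X) (Or.inr ⟨𝒰, h.1, h.2, rfl⟩)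

lemma countable_of_fibers {α β : Type*} {S : Set α} {g : α → β}
    (hT : (g '' S).Countable) (h : ∀ b, {a | a ∈ S ∧ g a = b}.Countable) : S.Countable := by
  have hsub : S ⊆ ⋃ b ∈ g '' S, {a | a ∈ S ∧ g a = b} := by
    intro a ha
    exact mem_biUnion (mem_image_of_mem g ha) ⟨ha, rfl⟩
  exact (hT.biUnion (fun b _ => h b)).mono hsub

/-- pigeonhole into ℕ -/
lemma exists_uncountable_fiber {α : Type*} {S : Set α} (hS : ¬S.Countable) (g : α → ℕ) :
    ∃ n, ¬{a | a ∈ S ∧ g a = n}.Countable := by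
  by_contra hno
  push_neg at hno
  exact hS (countable_of_fibers (Set.to_countable _) hno)

lemma uncountable_nonempty {α : Type*} {S : Set α} (hS : ¬S.Countable) : S.Nonempty := by
  rcases S.eq_empty_or_nonempty with rfl | h
  · exact absurd countable_empty hS
  · exact h

lemma exists_injOn_uncountable {α β : Type*} {S : Set α} (hS : ¬S.Countable) (g : α → β)
    (hfib : ∀ b, {a | a ∈ S ∧ g a = b}.Countable) :
    ∃ S', S' ⊆ S ∧ ¬S'.Countable ∧ InjOn g S' := by
  have hT : ¬(g '' S).Countable := fun hT => hS (countable_of_fibers hT hfib)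
  have hne : Nonempty α := ⟨(uncountable_nonempty hS).choose⟩
  have hsec : ∀ b ∈ g '' S, ∃ a, a ∈ S ∧ g a = b := fun b hb => hb
  choose! σ hσS hσg using hsec
  refine ⟨σ '' (g '' S), ?_, ?_, ?_⟩
  · rintro x ⟨b, hb, rfl⟩; exact hσS b hb
  · intro hcnt
    refine hT ?_
    have : g '' S ⊆ g '' (σ '' (g '' S)) := by
      rintro b hb
      exact ⟨σ b, mem_image_of_mem σ hb, hσg b hb⟩
    exact (hcnt.image g).mono this
  · rintro x ⟨b, hb, rfl⟩ y ⟨b', hb', rfl⟩ hxy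
    rw [hσg b hb, hσg b' hb'] at hxy
    rw [hxy]

lemma uncountable_second {α : Type*} {S : Set α} (hS : ¬S.Countable) (e : α) :
    ∃ e', e' ∈ S ∧ e' ≠ e := by
  by_contra hno
  push_neg at hno
  refine hS (Set.Countable.mono ?_ (countable_singleton e))
  intro x hx
  exact hno x hx

/-- The core lemma: no uncountable strongly discrete subset of non-isolated points. -/
lemma no_uncountable_strongly_discrete [T2Space X] [FirstCountableTopology (CL X)]
    (E : Set X) (hEun : ¬E.Countable) (hdisc : ∀ F, F ⊆ E → F.Nonempty → IsClosed F)
    (hNI : E ⊆ NI X) : False := by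
  classical
  have hEne : E.Nonempty := uncountable_nonempty hEun
  set EC : CL X := ⟨E, hEne, hdisc E Subset.rfl hEne⟩ with hEC
  obtain ⟨W, 𝒱, hWo, h𝒱good, hEbas, hbasis⟩ := exists_bas_basis EC
  have hEW : ∀ n, E ⊆ W n := fun n => (hEbas n).1
  have hEhits : ∀ n, ∀ V ∈ 𝒱 n, (E ∩ V).Nonempty := fun n => (hEbas n).2
  -- finiteness of pins
  have hpinsfin : ∀ (m : ℕ) (e : X), e ∈ E → {V | V ∈ 𝒱 m ∧ E ∩ V = {e}}.Finite := by
    intro m e he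
    obtain ⟨t, ht, hfin⟩ := (lf_iff _).1 (h𝒱good m).2 e
    refine hfin.subset ?_
    rintro V ⟨hV, hpin⟩
    have heV : e ∈ V := by
      have : e ∈ E ∩ V := by rw [hpin]; exact rfl
      exact this.2
    exact ⟨hV, ⟨e, heV, mem_of_mem_nhds ht⟩⟩
  -- the attack lemma
  have attack : ∀ (m : ℕ) (e : X), e ∈ E → ∀ O : Set X, IsOpen O → O ∩ E = {e} →
      bas (W m) (𝒱 m) ⊆ lowerN {O} →
      ∃ V, V ∈ 𝒱 m ∧ E ∩ V = {e} ∧ V ∩ W m ⊆ O := by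
    intro m e he O hOopen hOE hsubN
    by_contra hno
    push_neg at hno
    obtain ⟨e', he'E, he'ne⟩ := uncountable_second hEun e
    set pins := {V | V ∈ 𝒱 m ∧ E ∩ V = {e}} with hpins
    have hz : ∀ V : Set X, ∃ z, V ∈ pins → (z ∈ V ∩ W m ∧ z ∉ O) := by
      intro V
      by_cases hV : V ∈ pins
      · obtain ⟨z, hz1, hz2⟩ := not_subset.1 (hno V hV.1 hV.2)
        exact ⟨z, fun _ => ⟨hz1, hz2⟩⟩
      · exact ⟨e, fun hc => absurd hc hV⟩
    choose zf hzf using hz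
    set Z := zf '' pins with hZ
    have hZfin : Z.Finite := (hpinsfin m e he).image zf
    have hCne : ((E \ {e}) ∪ Z).Nonempty := ⟨e', Or.inl ⟨he'E, he'ne⟩⟩
    have hCcl : IsClosed ((E \ {e}) ∪ Z) := by
      rcases Z.eq_empty_or_nonempty with hZe | hZne
      · rw [hZe, union_empty]
        exact hdisc _ diff_subset ⟨e', ⟨he'E, he'ne⟩⟩
      · exact (hdisc _ diff_subset ⟨e', ⟨he'E, he'ne⟩⟩).union hZfin.isClosed
    set C : CL X := ⟨(E \ {e}) ∪ Z, hCne, hCcl⟩ with hC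
    have hCbas : C ∈ bas (W m) (𝒱 m) := by
      constructor
      · rintro x (hx | hx)
        · exact hEW m hx.1
        · obtain ⟨V, hV, rfl⟩ := hx
          exact (hzf V hV).1.2
      · intro V hV
        by_cases hpin : E ∩ V = {e}
        · have hVpins : V ∈ pins := ⟨hV, hpin⟩
          exact ⟨zf V, Or.inr (mem_image_of_mem zf hVpins), (hzf V hVpins).1.1⟩
        · obtain ⟨x, hxE, hxV⟩ := hEhits m V hV
          have hex : ∃ y, y ∈ E ∩ V ∧ y ≠ e := by
            by_contra hall
            push_neg at hall
            have hxe : x = e := hall x ⟨hxE, hxV⟩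
            refine hpin (Subset.antisymm (fun y hy => hall y hy) ?_)
            rintro y rfl
            exact hxe ▸ ⟨hxE, hxV⟩
          obtain ⟨y, ⟨hyE, hyV⟩, hyne⟩ := hex
          exact ⟨y, Or.inl ⟨hyE, hyne⟩, hyV⟩
    have := hsubN hCbas O rfl
    obtain ⟨x, hxC, hxO⟩ := this
    rcases hxC with hx | hx
    · have : x ∈ O ∩ E := ⟨hxO, hx.1⟩
      rw [hOE] at this
      exact hx.2 this
    · obtain ⟨V, hV, rfl⟩ := hx
      exact (hzf V hV).2 hxO
  have hcl : ∀ F, F ⊆ E → IsClosed F := by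
    intro F hF
    rcases F.eq_empty_or_nonempty with rfl | hne
    · exact isClosed_empty
    · exact hdisc F hF hne
  -- pin neighborhoods form a base of isolating neighborhoods
  have hbaseprop : ∀ e, e ∈ E → ∀ O : Set X, IsOpen O → O ∩ E = {e} →
      ∃ m, ∃ V, V ∈ 𝒱 m ∧ E ∩ V = {e} ∧ V ∩ W m ⊆ O := by
    intro e he O hOopen hOE
    have heO : e ∈ O := by
      have h1 : e ∈ O ∩ E := by rw [hOE]; rfl
      exact h1.1
    have hNopen : IsOpen (lowerN {O} : Set (CL X)) := isOpen_lowerN (goodFam_singleton hOopen)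
    have hNmem : EC ∈ lowerN {O} := by
      intro U hU
      rw [mem_singleton_iff] at hU
      subst hU
      exact ⟨e, he, heO⟩
    obtain ⟨m, hm⟩ := hbasis _ (hNopen.mem_nhds hNmem)
    exact ⟨m, attack m e he O hOopen hOE hm⟩
  -- choose one pin per point
  have hpin1 : ∀ e, e ∈ E → ∃ m, ∃ V, V ∈ 𝒱 m ∧ E ∩ V = {e} := by
    intro e he
    have hO : IsOpen ((E \ {e})ᶜ) := (hcl _ diff_subset).isOpen_compl
    have hOE : (E \ {e})ᶜ ∩ E = {e} := by
      ext x
      simp only [mem_inter_iff, mem_compl_iff, mem_diff, mem_singleton_iff]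
      constructor
      · rintro ⟨hx1, hx2⟩
        by_contra hne
        exact hx1 ⟨hx2, hne⟩
      · rintro rfl
        exact ⟨fun hc => hc.2 rfl, he⟩
    obtain ⟨m, V, h1, h2, _⟩ := hbaseprop e he _ hO hOE
    exact ⟨m, V, h1, h2⟩
  choose! j Ve hVe1 hVe2 using hpin1
  obtain ⟨n₁, hn₁⟩ := exists_uncountable_fiber hEun j
  set E₂ := {e | e ∈ E ∧ j e = n₁} with hE₂
  have hE₂E : E₂ ⊆ E := fun e he => he.1
  have hVe𝒱 : ∀ e ∈ E₂, Ve e ∈ 𝒱 n₁ := by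
    intro e he
    have h1 := hVe1 e he.1
    rw [he.2] at h1
    exact h1
  have hVeE : ∀ e ∈ E, E ∩ Ve e = {e} := fun e he => hVe2 e he
  have hVeInj : InjOn Ve E₂ := by
    intro a ha b hb hab
    have h1 : ({a} : Set X) = {b} := by rw [← hVeE a ha.1, ← hVeE b hb.1, hab]
    exact singleton_eq_singleton_iff.1 h1
  have heVe : ∀ e ∈ E, e ∈ Ve e := by
    intro e he
    have h1 : e ∈ E ∩ Ve e := by rw [hVeE e he]; rfl
    exact h1.2
  -- enumerate pin neighborhoods
  have hpinenum : ∀ e, e ∈ E → ∃ g : ℕ → Set X,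
      (∀ i, IsOpen (g i) ∧ e ∈ g i) ∧
      (∀ O : Set X, IsOpen O → O ∩ E = {e} → ∃ i, g i ⊆ O) := by
    intro e he
    set P := {R : Set X | ∃ m, ∃ V, V ∈ 𝒱 m ∧ E ∩ V = {e} ∧ R = V ∩ W m} with hP
    have hPc : P.Countable := by
      have hsub2 : P ⊆ ⋃ m : ℕ, (fun V => V ∩ W m) '' {V | V ∈ 𝒱 m ∧ E ∩ V = {e}} := by
        rintro R ⟨m, V, h1, h2, rfl⟩
        exact mem_iUnion.2 ⟨m, ⟨V, ⟨h1, h2⟩, rfl⟩⟩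
      exact (countable_iUnion (fun m => ((hpinsfin m e he).image _).countable)).mono hsub2
    have hPne : P.Nonempty := ⟨Ve e ∩ W (j e), j e, Ve e, hVe1 e he, hVe2 e he, rfl⟩
    obtain ⟨g, hg⟩ := hPc.exists_eq_range hPne
    refine ⟨g, ?_, ?_⟩
    · intro i
      have hgi : g i ∈ P := by rw [hg]; exact mem_range_self i
      obtain ⟨m, V, h1, h2, heq⟩ := hgi
      rw [heq]
      refine ⟨((h𝒱good m).1 V h1).inter (hWo m), ?_, hEW m he⟩
      have h3 : e ∈ E ∩ V := by rw [h2]; rfl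
      exact h3.2
    · intro O hOopen hOE
      obtain ⟨m, V, h1, h2, h3⟩ := hbaseprop e he O hOopen hOE
      have hmem : V ∩ W m ∈ P := ⟨m, V, h1, h2, rfl⟩
      rw [hg] at hmem
      obtain ⟨i, hi⟩ := hmem
      exact ⟨i, hi ▸ h3⟩
  choose! gfun hgprop1 hgprop2 using hpinenum
  -- the decreasing isolating neighborhoods
  set Q : X → ℕ → Set X :=
    fun e k => Ve e ∩ W n₁ ∩ ⋂ i ∈ Finset.range (k + 1), gfun e i with hQdef
  have hQopen : ∀ e ∈ E₂, ∀ k, IsOpen (Q e k) := by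
    intro e he k
    exact (((h𝒱good n₁).1 _ (hVe𝒱 e he)).inter (hWo n₁)).inter
      (isOpen_biInter_finset (fun i _ => (hgprop1 e he.1 i).1))
  have hQe : ∀ e ∈ E₂, ∀ k, e ∈ Q e k := by
    intro e he k
    exact ⟨⟨heVe e he.1, hEW n₁ he.1⟩, mem_biInter (fun i _ => (hgprop1 e he.1 i).2)⟩
  have hQE : ∀ e ∈ E₂, ∀ k, Q e k ∩ E = {e} := by
    intro e he k
    apply Subset.antisymm
    · rintro x ⟨hxQ, hxE⟩
      have : x ∈ E ∩ Ve e := ⟨hxE, hxQ.1.1⟩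
      rw [hVeE e he.1] at this
      exact this
    · intro x hx
      rw [mem_singleton_iff] at hx
      rw [hx]
      exact ⟨hQe e he k, he.1⟩
  have hQmono : ∀ e, ∀ k l : ℕ, k ≤ l → Q e l ⊆ Q e k := by
    intro e k l hkl x hx
    refine ⟨hx.1, ?_⟩
    have hx2 := hx.2
    rw [mem_iInter₂] at hx2 ⊢
    intro i hi
    exact hx2 i (Finset.mem_range.2 (lt_of_lt_of_le (Finset.mem_range.1 hi) (by omega)))
  have hQVe : ∀ e k, Q e k ⊆ Ve e := fun e k x hx => hx.1.1
  have hQshrink : ∀ e ∈ E₂, ∀ t, t ≠ e → ∃ k, t ∉ Q e k := by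
    intro e he t ht
    set O := ((E \ {e}) ∪ {t})ᶜ with hO
    have hOopen : IsOpen O :=
      (IsClosed.union (hcl _ diff_subset) isClosed_singleton).isOpen_compl
    have hOE : O ∩ E = {e} := by
      ext x
      simp only [hO, mem_inter_iff, mem_compl_iff, mem_union, mem_diff, mem_singleton_iff]
      constructor
      · rintro ⟨hx1, hx2⟩
        by_contra hne
        exact hx1 (Or.inl ⟨hx2, hne⟩)
      · rintro rfl
        refine ⟨?_, he.1⟩
        rintro (hc | hc)
        · exact hc.2 rfl
        · exact ht hc.symm
    obtain ⟨i, hi⟩ := hgprop2 e he.1 O hOopen hOE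
    refine ⟨i, fun htQ => ?_⟩
    have htg : t ∈ gfun e i := by
      have hx2 := htQ.2
      rw [mem_iInter₂] at hx2
      exact hx2 i (Finset.self_mem_range_succ i)
    exact (hi htg) (Or.inr rfl)
  -- bound function
  have hbound : ∀ (m : ℕ), ∀ e ∈ E₂, ∃ b : ℕ, ∀ k, b ≤ k →
      ∀ V ∈ 𝒱 m, E ∩ V = {e} → ¬(V ∩ W m ⊆ Q e k) := by
    intro m e he
    have hperpin : ∀ V : Set X, ∃ b : ℕ,
        (V ∈ 𝒱 m ∧ E ∩ V = {e}) → ∀ k, b ≤ k → ¬(V ∩ W m ⊆ Q e k) := by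
      intro V
      by_cases hV : V ∈ 𝒱 m ∧ E ∩ V = {e}
      · have heV : e ∈ V := by
          have h3 : e ∈ E ∩ V := by rw [hV.2]; rfl
          exact h3.2
        have heVW : e ∈ V ∩ W m := ⟨heV, hEW m he.1⟩
        have hne2 : ∃ t, t ∈ V ∩ W m ∧ t ≠ e := by
          by_contra hall
          push_neg at hall
          have heq : V ∩ W m = {e} := by
            apply Subset.antisymm
            · intro t ht2
              exact hall t ht2
            · rintro t rfl
              exact heVW
          have hopen : IsOpen ({e} : Set X) := by
            rw [← heq]
            exact ((h𝒱good m).1 V hV.1).inter (hWo m)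
          exact hNI (hE₂E he) hopen
        obtain ⟨t, htVW, htne⟩ := hne2
        obtain ⟨k₀, hk₀⟩ := hQshrink e he t htne
        refine ⟨k₀, fun _ k hk hsub2 => hk₀ (hQmono e k₀ k hk (hsub2 htVW))⟩
      · exact ⟨0, fun hc => absurd hc hV⟩
    choose bf hbf using hperpin
    have him : ((bf '' {V | V ∈ 𝒱 m ∧ E ∩ V = {e}})).Finite :=
      (hpinsfin m e (hE₂E he)).image bf
    obtain ⟨B, hB⟩ := him.bddAbove
    refine ⟨B, fun k hk V hV1 hV2 => ?_⟩
    have hble : bf V ≤ B := hB (mem_image_of_mem bf ⟨hV1, hV2⟩)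
    exact hbf V ⟨hV1, hV2⟩ k (le_trans hble hk)
  choose! hfn hfnspec using hbound
  -- diagonalization
  have hE₂un : ¬E₂.Countable := hn₁
  have hE₂inf : E₂.Infinite := fun hfin => hE₂un hfin.countable
  set emb := Set.Infinite.natEmbedding E₂ hE₂inf with hembdef
  set f : X → ℕ := fun e =>
    if hj : ∃ i : ℕ, ((emb i : E₂) : X) = e then
      1 + (Finset.range (hj.choose + 1)).sup (fun m => hfn m e)
    else 0 with hf
  set 𝒰f := (fun e => Q e (f e)) '' E₂ with h𝒰f
  have h𝒰fgood : goodFam 𝒰f := by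
    constructor
    · rintro U ⟨e, he, rfl⟩
      exact hQopen e he (f e)
    · rw [lf_iff]
      intro x
      obtain ⟨t, ht, hfin⟩ := (lf_iff _).1 (h𝒱good n₁).2 x
      refine ⟨t, ht, ?_⟩
      have hsub2 : {U | U ∈ 𝒰f ∧ (U ∩ t).Nonempty} ⊆
          (fun e => Q e (f e)) '' {e | e ∈ E₂ ∧ (Ve e ∩ t).Nonempty} := by
        rintro U ⟨⟨e, he, rfl⟩, hne⟩
        exact ⟨e, ⟨he, hne.mono (inter_subset_inter_left t (hQVe e (f e)))⟩, rfl⟩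
      refine (Set.Finite.image _ ?_).subset hsub2
      refine Set.Finite.of_finite_image ?_ (hVeInj.mono (fun e he' => he'.1))
      refine hfin.subset ?_
      rintro V ⟨e, ⟨he, hne⟩, rfl⟩
      exact ⟨hVe𝒱 e he, hne⟩
  have hNstar : EC ∈ lowerN 𝒰f := by
    rintro U ⟨e, he, rfl⟩
    exact ⟨e, hE₂E he, hQe e he (f e)⟩
  obtain ⟨m₀, hm₀⟩ := hbasis _ ((isOpen_lowerN h𝒰fgood).mem_nhds hNstar)
  set e₀ : X := ((emb m₀ : E₂) : X) with he₀def
  have he₀ : e₀ ∈ E₂ := (emb m₀).2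
  have hsubN : bas (W m₀) (𝒱 m₀) ⊆ lowerN {Q e₀ (f e₀)} := by
    intro C hC U hU
    rw [mem_singleton_iff] at hU
    subst hU
    exact hm₀ hC _ ⟨e₀, he₀, rfl⟩
  obtain ⟨V, hV1, hV2, hV3⟩ := attack m₀ e₀ (hE₂E he₀) (Q e₀ (f e₀))
    (hQopen e₀ he₀ (f e₀)) (hQE e₀ he₀ (f e₀)) hsubN
  have hflt : ¬(hfn m₀ e₀ ≤ f e₀) := by
    intro hge
    exact hfnspec m₀ e₀ he₀ (f e₀) hge V hV1 hV2 hV3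
  refine hflt ?_
  have hj : ∃ i : ℕ, ((emb i : E₂) : X) = e₀ := ⟨m₀, rfl⟩
  have hchoose : hj.choose = m₀ := by
    have hspec := hj.choose_spec
    have h2 : emb hj.choose = emb m₀ := Subtype.ext hspec
    exact emb.injective h2
  have hle : hfn m₀ e₀ ≤ (Finset.range (hj.choose + 1)).sup (fun m => hfn m e₀) := by
    rw [hchoose]
    exact Finset.le_sup (f := fun m => hfn m e₀) (Finset.self_mem_range_succ m₀)
  have hfval : f e₀ = 1 + (Finset.range (hj.choose + 1)).sup (fun m => hfn m e₀) := by
    rw [hf]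
    exact dif_pos hj
  omega

end HSNI


namespace HSNI

variable {X : Type*} [TopologicalSpace X]

open scoped Classical in
noncomputable def lsseq (s : Set X) (x₀ : X) : Ordinal.{0} → X :=
  Ordinal.lt_wf.fix (fun o ih =>
    if hx : ∃ y, y ∈ s ∧ y ∉ closure {z | ∃ b, ∃ hb : b < o, ih b hb = z} then hx.choose else x₀)

open scoped Classical in
lemma lsseq_eq (s : Set X) (x₀ : X) (o : Ordinal.{0}) :
    lsseq s x₀ o =
      if hx : ∃ y, y ∈ s ∧ y ∉ closure (lsseq s x₀ '' Iio o) then hx.choose else x₀ := by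
  have hset : {z | ∃ b, ∃ hb : b < o, lsseq s x₀ b = z} = lsseq s x₀ '' Iio o := by
    ext z
    constructor
    · rintro ⟨b, hb, rfl⟩
      exact ⟨b, hb, rfl⟩
    · rintro ⟨b, hb, rfl⟩
      exact ⟨b, hb, rfl⟩
  conv_lhs => rw [lsseq, WellFounded.fix_eq]
  show (if hx : ∃ y, y ∈ s ∧ y ∉ closure {z | ∃ b, ∃ hb : b < o, lsseq s x₀ b = z}
    then hx.choose else x₀) = _
  rw [hset]

lemma exists_left_separated (s : Set X) (hsne : s.Nonempty)
    (hpick : ∀ c : Set X, c ⊆ s → c.Countable → ∃ x, x ∈ s ∧ x ∉ closure c)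
    (hIioCnt : ∀ o : Ordinal.{0}, o < (Cardinal.aleph 1).ord → (Iio o).Countable) :
    ∃ x : Ordinal.{0} → X, ∀ o, o < (Cardinal.aleph 1).ord →
      x o ∈ s ∧ x o ∉ closure (x '' Iio o) := by
  refine ⟨lsseq s hsne.choose, ?_⟩
  intro o
  induction o using Ordinal.induction with
  | _ o IH =>
    intro ho
    have hsub : lsseq s hsne.choose '' Iio o ⊆ s := by
      rintro _ ⟨b, hb, rfl⟩
      exact (IH b hb (lt_trans hb ho)).1
    have hcnt : (lsseq s hsne.choose '' Iio o).Countable := (hIioCnt o ho).image _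
    have hex : ∃ y, y ∈ s ∧ y ∉ closure (lsseq s hsne.choose '' Iio o) := hpick _ hsub hcnt
    rw [lsseq_eq, dif_pos hex]
    exact hex.choose_spec

end HSNI


open HSNI in
theorem hereditarilySeparable_NI_of_firstCountable
    {X : Type*} [TopologicalSpace X] [T2Space X]
    (h : FirstCountableTopology (CL X)) :
    HereditarilySeparable (NI X) := by
  haveI := h
  classical
  intro s hsNI
  by_contra hcon
  push_neg at hcon
  have hpick : ∀ c : Set X, c ⊆ s → c.Countable → ∃ x, x ∈ s ∧ x ∉ closure c := by
    intro c h1 h2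
    have h3 := hcon c h1 h2
    rw [not_subset] at h3
    obtain ⟨x, hx1, hx2⟩ := h3
    exact ⟨x, hx1, hx2⟩
  have hsne : s.Nonempty := by
    obtain ⟨x, hx, -⟩ := hpick ∅ (empty_subset s) countable_empty
    exact ⟨x, hx⟩
  haveI hXne : Nonempty X := ⟨hsne.choose⟩
  -- ω₁ and countability facts
  have hΩlim : Order.IsSuccLimit ((Cardinal.aleph 1).ord : Ordinal.{0}) :=
    Cardinal.isSuccLimit_ord (Cardinal.aleph0_le_aleph 1)
  have hΩpos : (0 : Ordinal.{0}) < (Cardinal.aleph 1).ord := hΩlim.pos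
  have hIioCnt : ∀ o : Ordinal.{0}, o < (Cardinal.aleph 1).ord → (Iio o).Countable := by
    intro o ho
    rw [Cardinal.countable_iff_lt_aleph_one, Ordinal.mk_Iio_ordinal]
    rw [← not_le]
    intro hle
    rw [Cardinal.aleph_one_le_lift] at hle
    exact absurd (Cardinal.lt_ord.1 ho) (not_lt.2 hle)
  have hΩnot : ¬(Iio ((Cardinal.aleph 1).ord : Ordinal.{0})).Countable := by
    intro hcnt
    rw [Cardinal.countable_iff_lt_aleph_one, Ordinal.mk_Iio_ordinal, Cardinal.card_ord] at hcnt
    exact absurd hcnt (not_lt.2 (Cardinal.aleph_one_le_lift.2 le_rfl))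
  have hunb : ∀ S : Set Ordinal.{0}, S ⊆ Iio (Cardinal.aleph 1).ord → ¬S.Countable →
      ∀ γ, γ < (Cardinal.aleph 1).ord → ∃ α ∈ S, γ < α := by
    intro S hS hSun γ hγ
    by_contra hno
    push_neg at hno
    refine hSun (Set.Countable.mono ?_ (hIioCnt (Order.succ γ) (hΩlim.succ_lt hγ)))
    intro α hα
    exact Order.lt_succ_iff.2 (hno α hα)
  -- the left-separated transfinite sequence
  obtain ⟨xseq, hxkey⟩ := exists_left_separated s hsne hpick hIioCnt
  set D := xseq '' Iio (Cardinal.aleph 1).ord with hDdef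
  have hDne : D.Nonempty := ⟨xseq 0, 0, hΩpos, rfl⟩
  set A : CL X := ⟨closure D, hDne.mono subset_closure, isClosed_closure⟩ with hAdef
  obtain ⟨W, 𝒱, hWo, h𝒱good, hAbas, hbasis⟩ := exists_bas_basis A
  -- each initial segment gives a neighborhood
  have hstep : ∀ o, o < (Cardinal.aleph 1).ord →
      ∃ n, bas (W n) (𝒱 n) ⊆ lowerN {(closure (xseq '' Iio o))ᶜ} := by
    intro o ho
    have hopen : IsOpen (lowerN ({(closure (xseq '' Iio o))ᶜ} : Set (Set X)) : Set (CL X)) :=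
      isOpen_lowerN (goodFam_singleton isClosed_closure.isOpen_compl)
    have hmem : A ∈ lowerN ({(closure (xseq '' Iio o))ᶜ} : Set (Set X)) := by
      intro U hU
      rw [mem_singleton_iff] at hU
      subst hU
      exact ⟨xseq o, subset_closure ⟨o, ho, rfl⟩, (hxkey o ho).2⟩
    exact hbasis _ (hopen.mem_nhds hmem)
  choose! nfun hnfun using hstep
  obtain ⟨n₀, hn₀⟩ := exists_uncountable_fiber (S := Iio (Cardinal.aleph 1).ord) hΩnot nfun
  set S₁ := {o : Ordinal.{0} | (o ∈ Iio (Cardinal.aleph 1).ord ∧ nfun o = n₀) ∧ o ≠ 0}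
    with hS₁def
  have hS₁un : ¬S₁.Countable := by
    intro hcnt
    refine hn₀ ((hcnt.union (countable_singleton 0)).mono ?_)
    intro x hx
    by_cases hx0 : x = 0
    · exact Or.inr hx0
    · exact Or.inl ⟨hx, hx0⟩
  have hS₁Ω : S₁ ⊆ Iio (Cardinal.aleph 1).ord := fun α hα => hα.1.1
  -- extract the V(α)
  have hVexists : ∀ α, α ∈ S₁ → ∃ V, V ∈ 𝒱 n₀ ∧
      closure (xseq '' Iio α) ∩ V = ∅ ∧ (closure D ∩ V).Nonempty := by
    intro α hα
    have hαΩ : α < (Cardinal.aleph 1).ord := hα.1.1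
    have hαpos : 0 < α := pos_iff_ne_zero.2 hα.2
    have hCne : (closure (xseq '' Iio α)).Nonempty :=
      ⟨xseq 0, subset_closure ⟨0, hαpos, rfl⟩⟩
    have hCW : closure (xseq '' Iio α) ⊆ W n₀ := by
      refine Subset.trans ?_ (hAbas n₀).1
      exact closure_mono (image_mono (fun b hb => lt_trans hb hαΩ))
    have hmiss : ∃ V ∈ 𝒱 n₀, ¬((closure (xseq '' Iio α)) ∩ V).Nonempty := by
      by_contra hall
      push_neg at hall
      have hC : (⟨closure (xseq '' Iio α), hCne, isClosed_closure⟩ : CL X) ∈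
          bas (W n₀) (𝒱 n₀) := ⟨hCW, hall⟩
      have h2 := hnfun α hαΩ
      rw [hα.1.2] at h2
      obtain ⟨y, hy1, hy2⟩ := h2 hC _ rfl
      exact hy2 hy1
    obtain ⟨V, hV, hVmiss⟩ := hmiss
    rw [not_nonempty_iff_eq_empty] at hVmiss
    exact ⟨V, hV, hVmiss, (hAbas n₀).2 V hV⟩
  choose! Vfun hV1 hV2 hV3 using hVexists
  -- fibers of Vfun are countable
  have hVfib : ∀ V₀ : Set X, {α | α ∈ S₁ ∧ Vfun α = V₀}.Countable := by
    intro V₀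
    by_contra hunc
    obtain ⟨α₀, hα₀⟩ := uncountable_nonempty hunc
    have hne : (closure D ∩ V₀).Nonempty := hα₀.2 ▸ hV3 α₀ hα₀.1
    obtain ⟨a, haD, haV⟩ := hne
    have hV₀open : IsOpen V₀ := hα₀.2 ▸ (h𝒱good n₀).1 _ (hV1 α₀ hα₀.1)
    obtain ⟨y, hyV, hyD⟩ := _root_.mem_closure_iff.1 haD V₀ hV₀open haV
    obtain ⟨γ, hγ, rfl⟩ := hyD
    have hTsub : {α | α ∈ S₁ ∧ Vfun α = V₀} ⊆ Iio (Cardinal.aleph 1).ord :=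
      fun α hα => hS₁Ω hα.1
    obtain ⟨α, hα, hγα⟩ := hunb _ hTsub hunc γ hγ
    have h1 : xseq γ ∈ closure (xseq '' Iio α) := subset_closure ⟨γ, hγα, rfl⟩
    have h2 := hV2 α hα.1
    rw [hα.2] at h2
    have h3 : xseq γ ∈ closure (xseq '' Iio α) ∩ V₀ := ⟨h1, hyV⟩
    rw [h2] at h3
    exact notMem_empty _ h3
  obtain ⟨S₂, hS₂sub, hS₂un, hS₂inj⟩ := exists_injOn_uncountable hS₁un Vfun hVfib
  -- choose the points a_α
  have haex : ∀ α, α ∈ S₂ → ∃ a, a ∈ closure D ∩ Vfun α :=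
    fun α hα => hV3 α (hS₂sub hα)
  choose! afun hafun using haex
  have hafib : ∀ b : X, {α | α ∈ S₂ ∧ afun α = b}.Countable := by
    intro b
    by_contra hunc
    obtain ⟨t, ht, hfin⟩ := (lf_iff _).1 (h𝒱good n₀).2 b
    have hsub2 : Vfun '' {α | α ∈ S₂ ∧ afun α = b} ⊆ {V | V ∈ 𝒱 n₀ ∧ (V ∩ t).Nonempty} := by
      rintro V ⟨α, ⟨hαS, hab⟩, rfl⟩
      refine ⟨hV1 α (hS₂sub hαS), ⟨b, ?_, mem_of_mem_nhds ht⟩⟩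
      rw [← hab]
      exact (hafun α hαS).2
    have hfin2 : {α | α ∈ S₂ ∧ afun α = b}.Finite :=
      Set.Finite.of_finite_image (hfin.subset hsub2) (hS₂inj.mono (fun α hα => hα.1))
    exact hunc hfin2.countable
  obtain ⟨S₃, hS₃sub, hS₃un, hS₃inj⟩ := exists_injOn_uncountable hS₂un afun hafib
  set E := afun '' S₃ with hEdef
  have hEun : ¬E.Countable := by
    intro hcnt
    refine hS₃un (countable_of_fibers hcnt ?_)
    intro b
    apply Set.Subsingleton.countable
    intro α hα β hβ
    exact hS₃inj hα.1 hβ.1 (hα.2.trans hβ.2.symm)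
  have hENI : E ⊆ NI X := by
    rintro _ ⟨α, hα, rfl⟩
    intro hopen
    have haD : afun α ∈ closure D := (hafun α (hS₃sub hα)).1
    obtain ⟨y, hy1, hy2⟩ := _root_.mem_closure_iff.1 haD _ hopen rfl
    rw [mem_singleton_iff] at hy1
    obtain ⟨γ, hγ, rfl⟩ := hy2
    have hxs : xseq γ ∈ s := (hxkey γ hγ).1
    have hNIx : ¬IsOpen ({xseq γ} : Set X) := hsNI hxs
    rw [hy1] at hNIx
    exact hNIx hopen
  have hdisc : ∀ F, F ⊆ E → F.Nonempty → IsClosed F := by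
    intro F hF _
    apply isClosed_of_closure_subset
    intro b hb
    obtain ⟨t, ht, hfin⟩ := (lf_iff _).1 (h𝒱good n₀).2 b
    have hFt : (F ∩ t).Finite := by
      have hsub2 : F ∩ t ⊆ afun '' {α | α ∈ S₃ ∧ (Vfun α ∩ t).Nonempty} := by
        rintro x ⟨hxF, hxt⟩
        obtain ⟨α, hα, rfl⟩ := hF hxF
        exact ⟨α, ⟨hα, ⟨afun α, (hafun α (hS₃sub hα)).2, hxt⟩⟩, rfl⟩
      refine (Set.Finite.image _ ?_).subset hsub2
      refine Set.Finite.of_finite_image (hfin.subset ?_)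
        ((hS₂inj.mono hS₃sub).mono (fun α hα => hα.1))
      rintro V ⟨α, ⟨hα, hne⟩, rfl⟩
      exact ⟨hV1 α (hS₂sub (hS₃sub hα)), hne⟩
    have hbmem : b ∈ closure (F ∩ t) := by
      rw [_root_.mem_closure_iff]
      intro O hOopen hbO
      obtain ⟨t', ht'sub, ht'open, hbt'⟩ := mem_nhds_iff.1 ht
      obtain ⟨y, hy1, hy2⟩ :=
        _root_.mem_closure_iff.1 hb (O ∩ t') (hOopen.inter ht'open) ⟨hbO, hbt'⟩
      exact ⟨y, hy1.1, hy2, ht'sub hy1.2⟩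
    rw [hFt.isClosed.closure_eq] at hbmem
    exact hbmem.1
  exact no_uncountable_strongly_discrete E hEun hdisc hENI
end

section
/- For a Hausdorff space X: if every point of (CL(X), τ_locfin) is a G_δ-set, then X is perfect (every closed set is a G_δ) and every nonempty closed subset of X has a σ-locally finite external π-base. -/
open Set TopologicalSpace

/-- `B` is an external π-base (of open sets) for `A`. -/
def ExternalPiBase {X : Type*} [TopologicalSpace X] (B : Set (Set X)) (A : Set X) : Prop :=
  (∀ b ∈ B, IsOpen b) ∧
  ∀ U : Set X, IsOpen U → (U ∩ A).Nonempty → ∃ b ∈ B, (b ∩ A).Nonempty ∧ b ∩ A ⊆ U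

section Aux

variable {X : Type*} [TopologicalSpace X]

lemma lf_iff (s : Set (Set X)) :
    LocallyFinite (fun U : s => (U : Set X)) ↔
      ∀ x : X, ∃ t ∈ nhds x, {U ∈ s | (U ∩ t).Nonempty}.Finite := by
  constructor
  · intro h x
    obtain ⟨t, ht, hfin⟩ := h x
    refine ⟨t, ht, ?_⟩
    have he : {U ∈ s | (U ∩ t).Nonempty} =
        Subtype.val '' {i : s | ((i : Set X) ∩ t).Nonempty} := by
      ext U
      constructor
      · rintro ⟨hUs, hU⟩; exact ⟨⟨U, hUs⟩, hU, rfl⟩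
      · rintro ⟨i, hi, rfl⟩; exact ⟨i.2, hi⟩
    rw [he]
    exact hfin.image _
  · intro h x
    obtain ⟨t, ht, hfin⟩ := h x
    refine ⟨t, ht, ?_⟩
    have hsub : {i : s | ((i : Set X) ∩ t).Nonempty} ⊆
        Subtype.val ⁻¹' {U ∈ s | (U ∩ t).Nonempty} := fun i hi => ⟨i.2, hi⟩
    exact ((hfin.preimage Subtype.val_injective.injOn).subset hsub)

lemma lf_of_finite {s : Set (Set X)} (hs : s.Finite) :
    LocallyFinite (fun U : s => (U : Set X)) := by
  have : Finite s := hs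
  exact locallyFinite_of_finite _

lemma lf_union {s t : Set (Set X)}
    (hs : LocallyFinite (fun U : s => (U : Set X)))
    (ht : LocallyFinite (fun U : t => (U : Set X))) :
    LocallyFinite (fun U : ↥(s ∪ t) => (U : Set X)) := by
  rw [lf_iff] at hs ht ⊢
  intro x
  obtain ⟨t₁, h₁, hf₁⟩ := hs x
  obtain ⟨t₂, h₂, hf₂⟩ := ht x
  refine ⟨t₁ ∩ t₂, Filter.inter_mem h₁ h₂, (hf₁.union hf₂).subset ?_⟩
  rintro U ⟨hU | hU, hne⟩
  · exact Or.inl ⟨hU, hne.mono fun y hy => ⟨hy.1, hy.2.1⟩⟩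
  · exact Or.inr ⟨hU, hne.mono fun y hy => ⟨hy.1, hy.2.2⟩⟩

lemma lf_insert {a : Set X} {s : Set (Set X)}
    (h : LocallyFinite (fun U : s => (U : Set X))) :
    LocallyFinite (fun U : ↥(insert a s) => (U : Set X)) := by
  rw [lf_iff] at h ⊢
  intro x
  obtain ⟨t, ht, hf⟩ := h x
  refine ⟨t, ht, (hf.insert a).subset ?_⟩
  rintro U ⟨hU | hU, hne⟩
  · exact Or.inl hU
  · exact Or.inr ⟨hU, hne⟩

lemma exists_VW (A : CL X) {F : Set (Set (CL X))} (hfin : F.Finite) :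
    F ⊆ ({S | ∃ U : Set X, IsOpen U ∧ S = {A : CL X | A.carrier ⊆ U}} ∪
     {S | ∃ 𝒰 : Set (Set X), (∀ U ∈ 𝒰, IsOpen U) ∧
        LocallyFinite (fun U : 𝒰 => (U : Set X)) ∧
        S = {A : CL X | ∀ U ∈ 𝒰, (A.carrier ∩ U).Nonempty}}) →
    A ∈ ⋂₀ F →
    ∃ (V : Set X) (𝒲 : Set (Set X)),
      IsOpen V ∧ A.carrier ⊆ V ∧
      (∀ W ∈ 𝒲, IsOpen W) ∧ (∀ W ∈ 𝒲, (A.carrier ∩ W).Nonempty) ∧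
      LocallyFinite (fun U : 𝒲 => (U : Set X)) ∧
      ∀ B : CL X, B.carrier ⊆ V → (∀ W ∈ 𝒲, (B.carrier ∩ W).Nonempty) → B ∈ ⋂₀ F := by
  refine Set.Finite.induction_on (motive := fun (F : Set (Set (CL X))) _ => F ⊆ _ → A ∈ ⋂₀ F → ∃ (V : Set X) (𝒲 : Set (Set X)),
      IsOpen V ∧ A.carrier ⊆ V ∧
      (∀ W ∈ 𝒲, IsOpen W) ∧ (∀ W ∈ 𝒲, (A.carrier ∩ W).Nonempty) ∧
      LocallyFinite (fun U : 𝒲 => (U : Set X)) ∧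
      ∀ B : CL X, B.carrier ⊆ V → (∀ W ∈ 𝒲, (B.carrier ∩ W).Nonempty) → B ∈ ⋂₀ F) F hfin ?_ ?_
  · intro _ _
    exact ⟨univ, ∅, isOpen_univ, subset_univ _, by simp, by simp,
      lf_of_finite finite_empty, by simp⟩
  · intro a s ha hs ih hsub hA
    have haS := hsub (mem_insert a s)
    have hAa : A ∈ a := hA a (mem_insert a s)
    have hAs : A ∈ ⋂₀ s := fun u hu => hA u (mem_insert_of_mem a hu)
    obtain ⟨V, 𝒲, hVo, hAV, h𝒲o, h𝒲A, h𝒲lf, hkey⟩ :=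
      ih (fun u hu => hsub (mem_insert_of_mem a hu)) hAs
    rcases haS with ⟨U, hUo, rfl⟩ | ⟨𝒰, h𝒰o, h𝒰lf, rfl⟩
    · refine ⟨V ∩ U, 𝒲, hVo.inter hUo, subset_inter hAV hAa, h𝒲o, h𝒲A, h𝒲lf, ?_⟩
      intro B hBV hBW
      rw [sInter_insert]
      exact ⟨hBV.trans inter_subset_right,
        hkey B (hBV.trans inter_subset_left) hBW⟩
    · refine ⟨V, 𝒲 ∪ 𝒰, hVo, hAV, ?_, ?_, lf_union h𝒲lf h𝒰lf, ?_⟩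
      · rintro W (hW | hW)
        exacts [h𝒲o W hW, h𝒰o W hW]
      · rintro W (hW | hW)
        exacts [h𝒲A W hW, hAa W hW]
      · intro B hBV hBW
        rw [sInter_insert]
        exact ⟨fun U hU => hBW U (Or.inr hU),
          hkey B hBV fun W hW => hBW W (Or.inl hW)⟩

lemma key_lemma (A : CL X) (h : IsGδ ({A} : Set (CL X))) :
    ∃ (V : ℕ → Set X) (𝒲 : ℕ → Set (Set X)),
      (∀ n, IsOpen (V n)) ∧ (∀ n, A.carrier ⊆ V n) ∧
      (∀ n, ∀ W ∈ 𝒲 n, IsOpen W) ∧ (∀ n, ∀ W ∈ 𝒲 n, (A.carrier ∩ W).Nonempty) ∧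
      (∀ n, LocallyFinite (fun U : 𝒲 n => (U : Set X))) ∧
      ∀ D : CL X, (∀ n, D.carrier ⊆ V n) →
        (∀ n, ∀ W ∈ 𝒲 n, (D.carrier ∩ W).Nonempty) → D = A := by
  obtain ⟨g, hgo, hg⟩ := h.eq_iInter_nat
  have hAg : ∀ n, A ∈ g n := by
    intro n
    have : A ∈ ⋂ n, g n := hg ▸ rfl
    exact mem_iInter.1 this n
  have hbasis : IsTopologicalBasis
      ((fun f : Set (Set (CL X)) => ⋂₀ f) ''
        {f : Set (Set (CL X)) | f.Finite ∧
          f ⊆ ({S | ∃ U : Set X, IsOpen U ∧ S = {A : CL X | A.carrier ⊆ U}} ∪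
           {S | ∃ 𝒰 : Set (Set X), (∀ U ∈ 𝒰, IsOpen U) ∧
              LocallyFinite (fun U : 𝒰 => (U : Set X)) ∧
              S = {A : CL X | ∀ U ∈ 𝒰, (A.carrier ∩ U).Nonempty}})}) :=
    isTopologicalBasis_of_subbasis rfl
  have hstep : ∀ n : ℕ, ∃ (V : Set X) (𝒲 : Set (Set X)),
      IsOpen V ∧ A.carrier ⊆ V ∧
      (∀ W ∈ 𝒲, IsOpen W) ∧ (∀ W ∈ 𝒲, (A.carrier ∩ W).Nonempty) ∧
      LocallyFinite (fun U : 𝒲 => (U : Set X)) ∧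
      ∀ B : CL X, B.carrier ⊆ V → (∀ W ∈ 𝒲, (B.carrier ∩ W).Nonempty) → B ∈ g n := by
    intro n
    obtain ⟨v, ⟨F, ⟨hFfin, hFsub⟩, rfl⟩, hAv, hvg⟩ :=
      hbasis.exists_subset_of_mem_open (hAg n) (hgo n)
    obtain ⟨V, 𝒲, h1, h2, h3, h4, h5, h6⟩ := exists_VW A hFfin hFsub hAv
    exact ⟨V, 𝒲, h1, h2, h3, h4, h5, fun B hBV hBW => hvg (h6 B hBV hBW)⟩
  choose V 𝒲 h1 h2 h3 h4 h5 h6 using hstep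
  refine ⟨V, 𝒲, h1, h2, h3, h4, h5, ?_⟩
  intro D hDV hDW
  have : D ∈ ⋂ n, g n := mem_iInter.2 fun n => h6 n D (hDV n) (hDW n)
  rw [← hg] at this
  exact this

end Aux

theorem of_pointGdelta_CL_locFin {X : Type*} [TopologicalSpace X] [T2Space X]
    (h : ∀ A : CL X, IsGδ ({A} : Set (CL X))) :
    (∀ C : Set X, IsClosed C → IsGδ C) ∧
      ∀ A : Set X, IsClosed A → A.Nonempty →
        ∃ B : ℕ → Set (Set X),
          (∀ n, LocallyFinite (fun b : B n => (b : Set X))) ∧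
          ExternalPiBase (⋃ n, B n) A := by
  constructor
  · intro C hC
    rcases C.eq_empty_or_nonempty with rfl | hne
    · exact IsGδ.empty
    obtain ⟨V, 𝒲, h1, h2, h3, h4, h5, h6⟩ := key_lemma ⟨C, hne, hC⟩ (h _)
    have hCV : C = ⋂ n, V n := by
      apply Subset.antisymm (subset_iInter h2)
      intro x hx
      have hx' : ∀ n, x ∈ V n := mem_iInter.1 hx
      set D : CL X := ⟨C ∪ {x}, ⟨x, Or.inr rfl⟩, hC.union isClosed_singleton⟩ with hDdef
      have hD : D = ⟨C, hne, hC⟩ := by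
        apply h6
        · intro n
          exact union_subset (h2 n) (singleton_subset_iff.2 (hx' n))
        · intro n W hW
          exact (h4 n W hW).mono fun y hy => ⟨Or.inl hy.1, hy.2⟩
      have hcar : C ∪ {x} = C := congrArg CL.carrier hD
      show x ∈ C
      rw [← hcar]
      exact Or.inr rfl
    rw [hCV]
    exact IsGδ.iInter_of_isOpen h1
  · intro A hA hne
    obtain ⟨V, 𝒲, h1, h2, h3, h4, h5, h6⟩ := key_lemma ⟨A, hne, hA⟩ (h _)
    refine ⟨fun n => insert (V n) (𝒲 n), fun n => lf_insert (h5 n), ?_, ?_⟩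
    · intro b hb
      obtain ⟨n, hb⟩ := mem_iUnion.1 hb
      rcases hb with rfl | hb
      exacts [h1 n, h3 n b hb]
    · intro U hU hUA
      by_contra hcon
      push_neg at hcon
      by_cases hsub : A ⊆ U
      · obtain ⟨a, ha⟩ := hne
        exact hcon (V 0) (mem_iUnion.2 ⟨0, mem_insert _ _⟩)
          ⟨a, h2 0 ha, ha⟩ (fun y hy => hsub hy.2)
      · have hDne : (A ∩ Uᶜ).Nonempty := by
          obtain ⟨x, hxA, hxU⟩ := not_subset.1 hsub
          exact ⟨x, hxA, hxU⟩
        set D : CL X := ⟨A ∩ Uᶜ, hDne, hA.inter (isClosed_compl_iff.2 hU)⟩ with hDdef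
        have hD : D = ⟨A, hne, hA⟩ := by
          apply h6
          · intro n
            exact (inter_subset_left).trans (h2 n)
          · intro n W hW
            have hW' := hcon W (mem_iUnion.2 ⟨n, mem_insert_of_mem _ hW⟩)
            have hWA : (W ∩ A).Nonempty := (h4 n W hW).mono fun y hy => ⟨hy.2, hy.1⟩
            obtain ⟨x, hxW, hxU⟩ := not_subset.1 (hW' hWA)
            exact ⟨x, ⟨hxW.2, hxU⟩, hxW.1⟩
        have hcar : A ∩ Uᶜ = A := congrArg CL.carrier hD
        obtain ⟨x, hxU, hxA⟩ := hUA
        have : x ∈ A ∩ Uᶜ := hcar.symm ▸ hxA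
        exact this.2 hxU
end

section
/- For a Hausdorff space X, the hyperspace (CL(X), τ_locfin) has a countable network (is cosmic) if and only if X is compact and metrizable. -/
open Set TopologicalSpace

/-- A space is cosmic if it has a countable network. -/
def HasCountableNetwork (Y : Type*) [TopologicalSpace Y] : Prop :=
  ∃ N : Set (Set Y), N.Countable ∧
    ∀ y : Y, ∀ U : Set Y, IsOpen U → y ∈ U → ∃ s ∈ N, y ∈ s ∧ s ⊆ U

section Aux

variable {X : Type*} [TopologicalSpace X]

def CLsub (X : Type*) [TopologicalSpace X] : Set (Set (CL X)) :=
  ({S | ∃ U : Set X, IsOpen U ∧ S = {A : CL X | A.carrier ⊆ U}} ∪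
     {S | ∃ 𝒰 : Set (Set X), (∀ U ∈ 𝒰, IsOpen U) ∧
        LocallyFinite (fun U : 𝒰 => (U : Set X)) ∧
        S = {A : CL X | ∀ U ∈ 𝒰, (A.carrier ∩ U).Nonempty}})

lemma isOpen_CL_iff {W : Set (CL X)} : IsOpen W ↔ GenerateOpen (CLsub X) W := Iff.rfl

lemma isOpen_upper {U : Set X} (hU : IsOpen U) : IsOpen {A : CL X | A.carrier ⊆ U} :=
  GenerateOpen.basic _ (Or.inl ⟨U, hU, rfl⟩)

variable [T2Space X]

/-- The singleton embedding. -/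
def CL.sing (x : X) : CL X := ⟨{x}, singleton_nonempty x, isClosed_singleton⟩

lemma network_of_CL (h : HasCountableNetwork (CL X)) : HasCountableNetwork X := by
  obtain ⟨N, hNc, hN⟩ := h
  refine ⟨(fun s => {x : X | CL.sing x ∈ s}) '' N, hNc.image _, ?_⟩
  intro x U hU hx
  obtain ⟨s, hsN, hxs, hsub⟩ := hN (CL.sing x) {A : CL X | A.carrier ⊆ U} (isOpen_upper hU)
    (by simpa [CL.sing] using hx)
  refine ⟨_, mem_image_of_mem _ hsN, hxs, ?_⟩
  intro y hy
  have := hsub hy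
  simpa [CL.sing] using this

lemma compact_of_CL (h : HasCountableNetwork (CL X)) : CompactSpace X := by
  classical
  by_contra hc
  have hnc : ¬ IsCompact (univ : Set X) := fun hcu => hc ⟨hcu⟩
  rw [isCompact_iff_finite_subcover] at hnc
  push_neg at hnc
  obtain ⟨ι, U, hUo, hUc, hUf⟩ := hnc
  -- X is nonempty
  rcases isEmpty_or_nonempty X with hE | hNE
  · exact hUf ∅ (fun x _ => (IsEmpty.false x).elim)
  -- countable network on X
  obtain ⟨M, hMc, hM⟩ := network_of_CL h
  -- countable subcover
  set M' : Set (Set X) := {s ∈ M | ∃ i, s ⊆ U i} with hM'def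
  have hM'c : M'.Countable := hMc.mono (sep_subset _ _)
  have hM'ne : M'.Nonempty := by
    obtain ⟨x⟩ := hNE
    obtain ⟨i, hi⟩ := mem_iUnion.mp (hUc (mem_univ x))
    obtain ⟨s, hsM, hxs, hsub⟩ := hM x (U i) (hUo i) hi
    exact ⟨s, hsM, i, hsub⟩
  obtain ⟨e, he⟩ := hM'c.exists_eq_range hM'ne
  have hei : ∀ n, ∃ i, e n ⊆ U i := by
    intro n
    have : e n ∈ M' := by rw [he]; exact mem_range_self n
    exact this.2
  choose idx hidx using hei
  set V : ℕ → Set X := fun n => U (idx n) with hVdef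
  have hVo : ∀ n, IsOpen (V n) := fun n => hUo _
  have hVc : ∀ x : X, ∃ n, x ∈ V n := by
    intro x
    obtain ⟨i, hi⟩ := mem_iUnion.mp (hUc (mem_univ x))
    obtain ⟨s, hsM, hxs, hsub⟩ := hM x (U i) (hUo i) hi
    have hsM' : s ∈ M' := ⟨hsM, i, hsub⟩
    rw [he] at hsM'
    obtain ⟨n, hn⟩ := hsM'
    exact ⟨n, hidx n (hn ▸ hxs)⟩
  have hVf : ∀ t : Finset ℕ, ¬ (univ : Set X) ⊆ ⋃ n ∈ t, V n := by
    intro t ht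
    refine hUf (t.image idx) ?_
    intro x hx
    obtain ⟨n, hn, hxn⟩ := mem_iUnion₂.mp (ht hx)
    exact mem_iUnion₂.mpr ⟨idx n, Finset.mem_image_of_mem idx hn, hxn⟩
  -- escaping sequence
  have hesc : ∀ n : ℕ, ∃ y : X, y ∉ ⋃ k ∈ Finset.range (n+1), V k := by
    intro n
    by_contra hcon
    push_neg at hcon
    exact hVf (Finset.range (n+1)) (fun y _ => hcon y)
  choose x hx using hesc
  have hxV : ∀ {k n : ℕ}, x n ∈ V k → n < k := by
    intro k n hkn
    by_contra hle
    push_neg at hle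
    exact hx n (mem_iUnion₂.mpr ⟨k, Finset.mem_range.mpr (Nat.lt_succ_of_le hle), hkn⟩)
  set D : Set X := range x with hDdef
  -- D is infinite
  have hDinf : D.Infinite := by
    intro hfin
    choose κ hκ using hVc
    set m := hfin.toFinset.sup κ with hm
    have h1 : κ (x m) ≤ m := Finset.le_sup (hfin.mem_toFinset.mpr (mem_range_self m))
    have h2 : m < κ (x m) := hxV (hκ (x m))
    omega
  -- all subsets of D are closed
  have hSc : ∀ S : Set X, S ⊆ D → IsClosed S := by
    intro S hS
    rw [← isOpen_compl_iff, isOpen_iff_forall_mem_open]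
    intro y hy
    obtain ⟨k, hk⟩ := hVc y
    have hfin : (S ∩ V k).Finite := by
      refine ((finite_Iio k).image x).subset ?_
      rintro z ⟨hzS, hzV⟩
      obtain ⟨n, rfl⟩ := hS hzS
      exact ⟨n, hxV hzV, rfl⟩
    refine ⟨V k ∩ (S ∩ V k)ᶜ, ?_, (hVo k).inter hfin.isClosed.isOpen_compl,
      hk, fun h' => hy h'.1⟩
    rintro z ⟨hzV, hz⟩ hzS
    exact hz ⟨hzS, hzV⟩
  -- injection from Set ℕ
  obtain ⟨N, hNc, hN⟩ := h
  set f : ℕ → X := fun n => (Set.Infinite.natEmbedding D hDinf n : X) with hf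
  have hfinj : Function.Injective f := fun a b hab =>
    (Set.Infinite.natEmbedding D hDinf).injective (Subtype.ext hab)
  have hfD : ∀ n, f n ∈ D := fun n => (Set.Infinite.natEmbedding D hDinf n).2
  set A : Set ℕ → Set X := fun S => (fun n => f (n+1)) '' S ∪ {f 0} with hA
  have hAD : ∀ S, A S ⊆ D := by
    rintro S z (⟨n, _, rfl⟩ | rfl)
    · exact hfD _
    · exact hfD 0
  have key : ∀ S T : Set ℕ, A S = A T → S ⊆ T := by
    intro S T hST n hn
    have h1 : f (n+1) ∈ A T := hST ▸ (Or.inl ⟨n, hn, rfl⟩)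
    rcases h1 with ⟨m, hm, hme⟩ | hme
    · have h2 : m + 1 = n + 1 := hfinj hme
      rwa [(by omega : m = n)] at hm
    · rw [mem_singleton_iff] at hme
      exact absurd (hfinj hme) (by omega)
  have hAinj : Function.Injective A := fun S T hST =>
    Subset.antisymm (key S T hST) (key T S hST.symm)
  -- the CL elements and separating open sets
  have hAcl : ∀ S, IsClosed (A S) := fun S => hSc _ (hAD S)
  set 𝔄 : Set ℕ → CL X := fun S => ⟨A S, ⟨f 0, Or.inr rfl⟩, hAcl S⟩ with h𝔄
  have hDAcl : ∀ S, IsClosed (D \ A S) := fun S => hSc _ diff_subset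
  have hopen : ∀ S, IsOpen {C : CL X | C.carrier ⊆ (D \ A S)ᶜ} :=
    fun S => isOpen_upper (hDAcl S).isOpen_compl
  have hmem : ∀ S, 𝔄 S ∈ {C : CL X | C.carrier ⊆ (D \ A S)ᶜ} := by
    intro S z hz hz2
    exact hz2.2 hz
  have hch : ∀ S : Set ℕ, ∃ s ∈ N, 𝔄 S ∈ s ∧ s ⊆ {C : CL X | C.carrier ⊆ (D \ A S)ᶜ} :=
    fun S => hN (𝔄 S) _ (hopen S) (hmem S)
  choose σ hσN hσmem hσsub using hch
  have hσinj : Function.Injective σ := by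
    have key2 : ∀ S T : Set ℕ, σ S = σ T → A S ⊆ A T := by
      intro S T hστ z hz
      have h1 : 𝔄 S ∈ {C : CL X | C.carrier ⊆ (D \ A T)ᶜ} := hσsub T (hστ ▸ hσmem S)
      have h2 : z ∈ (D \ A T)ᶜ := h1 hz
      by_contra hzT
      exact h2 ⟨hAD S hz, hzT⟩
    intro S T hST
    exact hAinj (Subset.antisymm (key2 S T hST) (key2 T S hST.symm))
  -- contradiction with countability
  haveI : Countable ↥N := hNc.to_subtype
  have hcnt : Countable (Set ℕ) :=
    Function.Injective.countable (f := fun S => (⟨σ S, hσN S⟩ : ↥N))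
      (fun S T hST => hσinj (congrArg Subtype.val hST))
  obtain ⟨g, hg⟩ := countable_iff_exists_injective (Set ℕ) |>.mp hcnt
  exact Function.cantor_injective g hg

lemma secondCountable_of_network [CompactSpace X] (h : HasCountableNetwork X) :
    SecondCountableTopology X := by
  classical
  obtain ⟨M, hMc, hM⟩ := h
  -- choose separating opens for pairs with disjoint closures
  have key : ∀ p : Set X × Set X, ∃ UV : Set X × Set X,
      Disjoint (closure p.1) (closure p.2) →
      IsOpen UV.1 ∧ IsOpen UV.2 ∧ closure p.1 ⊆ UV.1 ∧ closure p.2 ⊆ UV.2 ∧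
        Disjoint UV.1 UV.2 := by
    intro p
    by_cases hd : Disjoint (closure p.1) (closure p.2)
    · obtain ⟨u, v, hu, hv, h1, h2, huv⟩ :=
        normal_separation isClosed_closure isClosed_closure hd
      exact ⟨(u, v), fun _ => ⟨hu, hv, h1, h2, huv⟩⟩
    · exact ⟨(∅, ∅), fun h' => absurd h' hd⟩
  choose UV hUV using key
  set Pairs : Set (Set X × Set X) :=
    {p | p.1 ∈ M ∧ p.2 ∈ M ∧ Disjoint (closure p.1) (closure p.2)} with hPairs
  have hPc : Pairs.Countable := (hMc.prod hMc).mono (fun p hp => mem_prod.mpr ⟨hp.1, hp.2.1⟩)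
  set 𝒰₀ : Set (Set X) := (fun p => (UV p).1) '' Pairs with h𝒰₀
  have h𝒰₀c : 𝒰₀.Countable := hPc.image _
  set 𝔅 : Set (Set X) := sInter '' {F | F.Finite ∧ F ⊆ 𝒰₀} with h𝔅
  have h𝔅c : 𝔅.Countable := (countable_setOf_finite_subset h𝒰₀c).image _
  have h𝒰₀o : ∀ u ∈ 𝒰₀, IsOpen u := by
    rintro u ⟨p, hp, rfl⟩
    exact (hUV p hp.2.2).1
  have h𝔅o : ∀ u ∈ 𝔅, IsOpen u := by
    rintro u ⟨F, ⟨hFf, hF𝒰⟩, rfl⟩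
    exact hFf.isOpen_sInter (fun t ht => h𝒰₀o t (hF𝒰 ht))
  have hbasis : IsTopologicalBasis 𝔅 := by
    refine isTopologicalBasis_of_isOpen_of_nhds h𝔅o ?_
    intro a u hau hu
    -- separate a from points outside u
    have sep : ∀ y ∈ uᶜ, ∃ p : Set X × Set X, p ∈ Pairs ∧ a ∈ p.1 ∧ y ∈ p.2 := by
      intro y hy
      have hay : a ≠ y := fun he => hy (he ▸ hau)
      obtain ⟨Aa, Bb, hAo, hBo, haA, hyB, hAB⟩ := t2_separation hay
      obtain ⟨C, hC𝓝, hCcl, hCA⟩ := exists_mem_nhds_isClosed_subset (hAo.mem_nhds haA)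
      obtain ⟨C', hC'𝓝, hC'cl, hC'B⟩ := exists_mem_nhds_isClosed_subset (hBo.mem_nhds hyB)
      obtain ⟨s, hsM, has, hsC⟩ := hM a (interior C) isOpen_interior
        (mem_interior_iff_mem_nhds.mpr hC𝓝)
      obtain ⟨t, htM, hyt, htC⟩ := hM y (interior C') isOpen_interior
        (mem_interior_iff_mem_nhds.mpr hC'𝓝)
      refine ⟨(s, t), ⟨hsM, htM, ?_⟩, has, hyt⟩
      have h1 : closure s ⊆ Aa :=
        (closure_minimal (hsC.trans interior_subset) hCcl).trans hCA
      have h2 : closure t ⊆ Bb :=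
        (closure_minimal (htC.trans interior_subset) hC'cl).trans hC'B
      exact hAB.mono h1 h2
    choose! p hpP hpa hpy using sep
    have hKcomp : IsCompact uᶜ := hu.isClosed_compl.isCompact
    have hcov : uᶜ ⊆ ⋃ y ∈ uᶜ, (UV (p y)).2 := by
      intro y hy
      exact mem_iUnion₂.mpr ⟨y, hy, (hUV (p y) (hpP y hy).2.2).2.2.2.1 (subset_closure (hpy y hy))⟩
    obtain ⟨b', hb'sub, hb'fin, hb'cov⟩ := hKcomp.elim_finite_subcover_image
      (fun y hy => (hUV (p y) (hpP y hy).2.2).2.1) hcov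
    set F : Set (Set X) := (fun y => (UV (p y)).1) '' b' with hF
    refine ⟨⋂₀ F, ⟨F, ⟨hb'fin.image _, ?_⟩, rfl⟩, ?_, ?_⟩
    · rintro w ⟨y, hy, rfl⟩
      exact ⟨p y, hpP y (hb'sub hy), rfl⟩
    · rintro w ⟨y, hy, rfl⟩
      exact (hUV (p y) (hpP y (hb'sub hy)).2.2).2.2.1 (subset_closure (hpa y (hb'sub hy)))
    · intro z hz
      by_contra hzu
      obtain ⟨y, hy, hzy⟩ := mem_iUnion₂.mp (hb'cov hzu)
      have hz1 : z ∈ (UV (p y)).1 := hz _ ⟨y, hy, rfl⟩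
      exact ((hUV (p y) (hpP y (hb'sub hy)).2.2).2.2.2.2).ne_of_mem hz1 hzy rfl
  exact hbasis.secondCountableTopology h𝔅c

lemma network_CL_of_compact_metrizable [CompactSpace X] [MetrizableSpace X] :
    HasCountableNetwork (CL X) := by
  classical
  haveI : SecondCountableTopology X := by
    letI := TopologicalSpace.metrizableSpaceMetric X
    infer_instance
  obtain ⟨b, hbc, hbne, hb⟩ := exists_countable_basis X
  set Net : Set (Set X) → Set (CL X) := fun F =>
    {A | A.carrier ⊆ ⋃₀ F ∧ ∀ B ∈ F, (A.carrier ∩ B).Nonempty} with hNet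
  -- covering helper
  have H1 : ∀ (A : CL X) (U : Set X), IsOpen U → A.carrier ⊆ U →
      ∃ F : Set (Set X), F.Finite ∧ F ⊆ b ∧ A.carrier ⊆ ⋃₀ F ∧ (∀ B ∈ F, B ⊆ U) ∧
        ∀ B ∈ F, (A.carrier ∩ B).Nonempty := by
    intro A U hU hAU
    have hE : ∀ a : X, a ∈ A.carrier → ∃ E, E ∈ b ∧ a ∈ E ∧ E ⊆ U := fun a ha =>
      hb.exists_subset_of_mem_open (hAU ha) hU
    choose! E hEb hEa hEU using hE
    have hAcomp : IsCompact A.carrier := A.isClosed'.isCompact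
    have hcov : A.carrier ⊆ ⋃ a ∈ A.carrier, E a := fun a ha =>
      mem_iUnion₂.mpr ⟨a, ha, hEa a ha⟩
    obtain ⟨b', hb'sub, hb'fin, hb'cov⟩ := hAcomp.elim_finite_subcover_image
      (fun a ha => hb.isOpen (hEb a ha)) hcov
    refine ⟨E '' b', hb'fin.image _, ?_, ?_, ?_, ?_⟩
    · rintro w ⟨a, ha, rfl⟩; exact hEb a (hb'sub ha)
    · intro z hz
      obtain ⟨a, ha, hza⟩ := mem_iUnion₂.mp (hb'cov hz)
      exact ⟨E a, ⟨a, ha, rfl⟩, hza⟩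
    · rintro w ⟨a, ha, rfl⟩; exact hEU a (hb'sub ha)
    · rintro w ⟨a, ha, rfl⟩; exact ⟨a, hb'sub ha, hEa a (hb'sub ha)⟩
  -- main induction
  have main : ∀ W : Set (CL X), GenerateOpen (CLsub X) W → ∀ A : CL X, A ∈ W →
      ∃ F : Set (Set X), (F.Finite ∧ F ⊆ b) ∧ A ∈ Net F ∧ Net F ⊆ W := by
    intro W hW
    induction hW with
    | basic s hs =>
      rcases hs with ⟨U, hU, rfl⟩ | ⟨𝒰, h𝒰o, h𝒰lf, rfl⟩
      · intro A hA
        obtain ⟨F, hFf, hFb, hFcov, hFU, hFmeet⟩ := H1 A U hU hA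
        refine ⟨F, ⟨hFf, hFb⟩, ⟨hFcov, hFmeet⟩, ?_⟩
        rintro A' ⟨hA'cov, -⟩
        exact hA'cov.trans (sUnion_subset hFU)
      · intro A hA
        -- 𝒰 is finite
        have h𝒰fin : 𝒰.Finite := by
          rw [← Set.finite_coe_iff]
          rw [← Set.finite_univ_iff (α := ↥𝒰)]
          have : {i : ↥𝒰 | ((i : Set X)).Nonempty} = univ := by
            ext i
            simp only [mem_setOf_eq, mem_univ, iff_true]
            exact (hA i i.2).mono inter_subset_right
          rw [← this]
          exact h𝒰lf.finite_nonempty_of_compact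
        have hE : ∀ U ∈ 𝒰, ∃ E, E ∈ b ∧ E ⊆ U ∧ (A.carrier ∩ E).Nonempty := by
          intro U hU
          obtain ⟨a, haA, haU⟩ := hA U hU
          obtain ⟨E, hEb, haE, hEU⟩ := hb.exists_subset_of_mem_open haU (h𝒰o U hU)
          exact ⟨E, hEb, hEU, ⟨a, haA, haE⟩⟩
        choose! E hEb hEU hEA using hE
        obtain ⟨F₀, hF₀f, hF₀b, hF₀cov, -, hF₀meet⟩ :=
          H1 A univ isOpen_univ (subset_univ _)
        refine ⟨F₀ ∪ E '' 𝒰, ⟨hF₀f.union (h𝒰fin.image _), ?_⟩, ⟨?_, ?_⟩, ?_⟩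
        · rintro w (hw | ⟨U, hU, rfl⟩)
          · exact hF₀b hw
          · exact hEb U hU
        · exact hF₀cov.trans (sUnion_subset_sUnion subset_union_left)
        · rintro B (hB | ⟨U, hU, rfl⟩)
          · exact hF₀meet B hB
          · exact hEA U hU
        · rintro A' ⟨-, hA'meet⟩ U hU
          exact ((hA'meet (E U) (Or.inr ⟨U, hU, rfl⟩)).mono
            (inter_subset_inter_right _ (hEU U hU)))
    | univ =>
      intro A _
      obtain ⟨F₀, hF₀f, hF₀b, hF₀cov, -, hF₀meet⟩ := H1 A univ isOpen_univ (subset_univ _)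
      exact ⟨F₀, ⟨hF₀f, hF₀b⟩, ⟨hF₀cov, hF₀meet⟩, subset_univ _⟩
    | inter s t _ _ ihs iht =>
      rintro A ⟨hAs, hAt⟩
      obtain ⟨F, ⟨hFf, hFb⟩, hAF, hFs⟩ := ihs A hAs
      obtain ⟨G, ⟨hGf, hGb⟩, hAG, hGt⟩ := iht A hAt
      haveI : Nonempty X := ⟨A.nonempty'.choose⟩
      -- refine both
      set 𝒪 : X → Set X := fun a => ⋂₀ {B ∈ F ∪ G | a ∈ B} with h𝒪
      have h𝒪o : ∀ a, IsOpen (𝒪 a) := by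
        intro a
        refine Set.Finite.isOpen_sInter ((hFf.union hGf).subset (sep_subset _ _)) ?_
        rintro B ⟨hB, -⟩
        rcases hB with hB | hB
        · exact hb.isOpen (hFb hB)
        · exact hb.isOpen (hGb hB)
      have h𝒪a : ∀ a, a ∈ 𝒪 a := fun a B hB => hB.2
      have h𝒪B : ∀ a, ∀ B ∈ F ∪ G, a ∈ B → 𝒪 a ⊆ B := fun a B hB haB =>
        sInter_subset_of_mem ⟨hB, haB⟩
      have hE : ∀ a : X, a ∈ A.carrier → ∃ E, E ∈ b ∧ a ∈ E ∧ E ⊆ 𝒪 a := fun a _ =>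
        hb.exists_subset_of_mem_open (h𝒪a a) (h𝒪o a)
      choose! E hEb hEa hE𝒪 using hE
      -- witnesses
      have hw : ∀ B ∈ F ∪ G, ∃ a, a ∈ A.carrier ∧ a ∈ B := by
        rintro B (hB | hB)
        · exact (hAF.2 B hB).imp (fun a ha => ⟨ha.1, ha.2⟩)
        · exact (hAG.2 B hB).imp (fun a ha => ⟨ha.1, ha.2⟩)
      choose! w hwA hwB using hw
      -- finite subcover
      have hAcomp : IsCompact A.carrier := A.isClosed'.isCompact
      have hcov : A.carrier ⊆ ⋃ a ∈ A.carrier, E a := fun a ha =>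
        mem_iUnion₂.mpr ⟨a, ha, hEa a ha⟩
      obtain ⟨b', hb'sub, hb'fin, hb'cov⟩ := hAcomp.elim_finite_subcover_image
        (fun a ha => hb.isOpen (hEb a ha)) hcov
      set P : Set X := b' ∪ w '' (F ∪ G) with hP
      have hPA : P ⊆ A.carrier := by
        rintro a (ha | ⟨B, hB, rfl⟩)
        · exact hb'sub ha
        · exact hwA B hB
      have hPfin : P.Finite := hb'fin.union ((hFf.union hGf).image _)
      set H : Set (Set X) := E '' P with hH
      have hNetH : ∀ K, K = F ∨ K = G → Net H ⊆ Net K := by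
        rintro K hK A' ⟨hA'cov, hA'meet⟩
        have hKsub : K ⊆ F ∪ G := by
          rcases hK with rfl | rfl
          · exact subset_union_left
          · exact subset_union_right
        have hANetK : A ∈ Net K := by rcases hK with rfl | rfl <;> assumption
        constructor
        · intro z hz
          obtain ⟨Ea, ⟨a, haP, rfl⟩, hzE⟩ := hA'cov hz
          obtain ⟨B, hBK, haB⟩ := hANetK.1 (hPA haP)
          exact ⟨B, hBK, (hE𝒪 a (hPA haP)).trans (h𝒪B a B (hKsub hBK) haB) hzE⟩
        · intro B hBK
          have hBFG : B ∈ F ∪ G := hKsub hBK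
          have hmeet := hA'meet (E (w B)) ⟨w B, Or.inr ⟨B, hBFG, rfl⟩, rfl⟩
          exact hmeet.mono (inter_subset_inter_right _
            ((hE𝒪 (w B) (hwA B hBFG)).trans (h𝒪B (w B) B hBFG (hwB B hBFG))))
      refine ⟨H, ⟨hPfin.image _, ?_⟩, ⟨?_, ?_⟩, ?_⟩
      · rintro Ea ⟨a, haP, rfl⟩; exact hEb a (hPA haP)
      · intro z hz
        obtain ⟨a, ha, hza⟩ := mem_iUnion₂.mp (hb'cov hz)
        exact ⟨E a, ⟨a, Or.inl ha, rfl⟩, hza⟩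
      · rintro Ea ⟨a, haP, rfl⟩
        exact ⟨a, hPA haP, hEa a (hPA haP)⟩
      · intro A' hA'
        exact ⟨hFs (hNetH F (Or.inl rfl) hA'), hGt (hNetH G (Or.inr rfl) hA')⟩
    | sUnion S _ ih =>
      intro A hA
      obtain ⟨W, hWS, hAW⟩ := hA
      obtain ⟨F, hF, hAF, hFW⟩ := ih W hWS A hAW
      exact ⟨F, hF, hAF, hFW.trans (subset_sUnion_of_mem hWS)⟩
  -- conclude
  refine ⟨Net '' {F | F.Finite ∧ F ⊆ b},
    (countable_setOf_finite_subset hbc).image _, ?_⟩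
  intro A W hW hAW
  obtain ⟨F, hF, hAF, hFW⟩ := main W hW A hAW
  exact ⟨Net F, mem_image_of_mem _ hF, hAF, hFW⟩

end Aux


theorem cosmic_CL_locFin_iff {X : Type*} [TopologicalSpace X] [T2Space X] :
    HasCountableNetwork (CL X) ↔
      (CompactSpace X ∧ TopologicalSpace.MetrizableSpace X) := by
  constructor
  · intro h
    have hcomp : CompactSpace X := compact_of_CL h
    haveI := hcomp
    haveI : SecondCountableTopology X := secondCountable_of_network (network_of_CL h)
    exact ⟨hcomp, inferInstance⟩
  · rintro ⟨hc, hm⟩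
    haveI := hc; haveI := hm
    exact network_CL_of_compact_metrizable
end
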